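/- arXiv:1803.05933 — 4 statements merged into one kernel-verified Lean document; each statement's English description precedes it below -/
import Mathlib

section
/- Let F be a field of characteristic zero, let P ∈ F[x₁,…,xₙ,y] and f ∈ F[x₁,…,xₙ] be polynomials such that P(x, f(x)) = 0 and δ := H₀[(∂P/∂y)(x, f(x))] ≠ 0. Then for every i ∈ {1, 2, …, deg(f)} and every polynomial h ∈ F[x₁,…,xₙ] with H_{≤ i−1}[f] = H_{≤ i−1}[h], one has H_{≤ i}[f] = H_{≤ i}[h − P(x, h)/δ]. -/
open Polynomial MvPolynomial

/-- `Hle k f` is `H_{≤k}[f]`, the sum of the homogeneous components of `f`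
of degree at most `k`. -/
noncomputable def Hle {F : Type*} [CommSemiring F] {σ : Type*} (k : ℕ)
    (f : MvPolynomial σ F) : MvPolynomial σ F :=
  ∑ i ∈ Finset.range (k + 1), MvPolynomial.homogeneousComponent i f

lemma degree_add' {σ : Type*} (a b : σ →₀ ℕ) :
    Finsupp.degree (a + b) = Finsupp.degree a + Finsupp.degree b := by
  simp [Finsupp.degree_eq_weight_one, map_add]

lemma coeff_Hle {F : Type*} [CommSemiring F] {σ : Type*} (k : ℕ)
    (f : MvPolynomial σ F) (m : σ →₀ ℕ) :
    MvPolynomial.coeff m (Hle k f) =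
      if Finsupp.degree m ≤ k then MvPolynomial.coeff m f else 0 := by
  unfold Hle
  rw [MvPolynomial.coeff_sum]
  simp only [MvPolynomial.coeff_homogeneousComponent]
  rw [Finset.sum_ite_eq (Finset.range (k + 1)) (Finsupp.degree m)
    (fun _ => MvPolynomial.coeff m f)]
  simp [Nat.lt_succ_iff]

lemma low_mul {F : Type*} [CommSemiring F] {σ : Type*}
    {p q : MvPolynomial σ F} {a b : ℕ}
    (hp : ∀ m : σ →₀ ℕ, Finsupp.degree m < a → MvPolynomial.coeff m p = 0)
    (hq : ∀ m : σ →₀ ℕ, Finsupp.degree m < b → MvPolynomial.coeff m q = 0) :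
    ∀ m : σ →₀ ℕ, Finsupp.degree m < a + b → MvPolynomial.coeff m (p * q) = 0 := by
  classical
  intro m hm
  rw [MvPolynomial.coeff_mul]
  apply Finset.sum_eq_zero
  intro x hx
  rw [Finset.HasAntidiagonal.mem_antidiagonal] at hx
  have hdeg : Finsupp.degree x.1 + Finsupp.degree x.2 = Finsupp.degree m := by
    rw [← degree_add', hx]
  rcases lt_or_ge (Finsupp.degree x.1) a with h1 | h1
  · rw [hp _ h1, zero_mul]
  · have : Finsupp.degree x.2 < b := by omega
    rw [hq _ this, mul_zero]

/-- **Hensel lifting step.** If `P(x, f) = 0` and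
`δ = H₀[(∂P/∂y)(x, f)] ≠ 0` then for every `1 ≤ i ≤ deg f` and every `h`
agreeing with `f` up to degree `i - 1`, the polynomial `h - P(x,h)/δ`
agrees with `f` up to degree `i`. -/
theorem hensel_lifting_step {F : Type*} [Field F] [CharZero F] {n : ℕ}
    (P : Polynomial (MvPolynomial (Fin n) F)) (f : MvPolynomial (Fin n) F)
    (hroot : Polynomial.eval f P = 0)
    (δ : F)
    (hδ : δ = MvPolynomial.constantCoeff
        (Polynomial.eval f (Polynomial.hasseDeriv 1 P)))
    (hδne : δ ≠ 0)
    (i : ℕ) (hi1 : 1 ≤ i) (hi2 : i ≤ f.totalDegree)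
    (h : MvPolynomial (Fin n) F)
    (hagree : Hle (i - 1) f = Hle (i - 1) h) :
    Hle i f = Hle i (h - δ⁻¹ • Polynomial.eval h P) := by
  set e : MvPolynomial (Fin n) F := h - f with he
  -- the error `e` has no components of degree < i
  have hlow : ∀ m : Fin n →₀ ℕ, Finsupp.degree m < i → MvPolynomial.coeff m e = 0 := by
    intro m hm
    have := congrArg (MvPolynomial.coeff m) hagree
    rw [coeff_Hle, coeff_Hle, if_pos (by omega), if_pos (by omega)] at this
    simp [he, MvPolynomial.coeff_sub, this]
  -- Taylor expansion of `P` at `f`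
  have hP : Polynomial.eval h P =
      ∑ j ∈ Finset.range ((Polynomial.taylor f P).natDegree + 1),
        Polynomial.eval f (Polynomial.hasseDeriv j P) * e ^ j := by
    have h1 : h = e + f := by ring
    calc Polynomial.eval h P = Polynomial.eval e (Polynomial.taylor f P) := by
          rw [Polynomial.taylor_eval, ← h1]
      _ = _ := by
          rw [Polynomial.eval_eq_sum_range]
          simp [Polynomial.taylor_coeff]
  -- key coefficient computation
  have key : ∀ m : Fin n →₀ ℕ, Finsupp.degree m ≤ i →
      MvPolynomial.coeff m (Polynomial.eval h P) = δ * MvPolynomial.coeff m e := by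
    intro m hm
    rw [hP, MvPolynomial.coeff_sum]
    have hterm : ∀ j ∈ Finset.range ((Polynomial.taylor f P).natDegree + 1),
        MvPolynomial.coeff m (Polynomial.eval f (Polynomial.hasseDeriv j P) * e ^ j) =
          if j = 1 then δ * MvPolynomial.coeff m e else 0 := by
      intro j _
      match j with
      | 0 => simp [hroot]
      | 1 =>
        simp only [pow_one, if_pos rfl]
        set c := Polynomial.eval f (Polynomial.hasseDeriv 1 P) with hc
        rw [MvPolynomial.coeff_mul]
        rw [Finset.sum_eq_single ((0 : Fin n →₀ ℕ), m)]
        · simp [hδ, hc, MvPolynomial.constantCoeff_eq]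
        · intro x hx hxne
          rw [Finset.HasAntidiagonal.mem_antidiagonal] at hx
          rcases lt_or_ge (Finsupp.degree x.2) i with h2 | h2
          · rw [hlow _ h2, mul_zero]
          · exfalso
            have hdeg : Finsupp.degree x.1 + Finsupp.degree x.2 = Finsupp.degree m := by
              rw [← degree_add', hx]
            have h10 : Finsupp.degree x.1 = 0 := by omega
            rw [Finsupp.degree_eq_zero_iff] at h10
            apply hxne
            have : x.2 = m := by rw [← hx, h10, zero_add]
            rw [← h10, ← this]
        · intro hmem
          exfalso
          exact hmem (Finset.HasAntidiagonal.mem_antidiagonal.mpr (zero_add m))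
      | (j' + 2) =>
        rw [if_neg (by omega)]
        have hpow : e ^ (j' + 2) = e * e * e ^ j' := by ring
        rw [hpow]
        have h2 : ∀ m : Fin n →₀ ℕ, Finsupp.degree m < i + i →
            MvPolynomial.coeff m (e * e) = 0 := low_mul hlow hlow
        have h3 : ∀ m : Fin n →₀ ℕ, Finsupp.degree m < (i + i) + 0 →
            MvPolynomial.coeff m (e * e * e ^ j') = 0 :=
          low_mul h2 (fun _ hm0 => absurd hm0 (by omega))
        have h4 : ∀ m : Fin n →₀ ℕ, Finsupp.degree m < 0 + (i + i + 0) →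
            MvPolynomial.coeff m
              (Polynomial.eval f (Polynomial.hasseDeriv (j' + 2) P) * (e * e * e ^ j')) = 0 :=
          low_mul (fun _ hm0 => absurd hm0 (by omega)) h3
        apply h4
        omega
    rw [Finset.sum_congr rfl hterm, Finset.sum_ite_eq' (Finset.range _) 1
      (fun _ => δ * MvPolynomial.coeff m e)]
    rw [if_pos]
    rw [Finset.mem_range]
    by_contra hcon
    -- then natDegree = 0, so taylor f P is constant; coeff 1 = 0, i.e. eval f (hasseDeriv 1 P)=0
    have hnd : (Polynomial.taylor f P).natDegree = 0 := by omega
    have : (Polynomial.taylor f P).coeff 1 = 0 :=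
      Polynomial.coeff_eq_zero_of_natDegree_lt (by omega)
    rw [Polynomial.taylor_coeff] at this
    rw [this] at hδ
    simp at hδ
    exact hδne hδ
  -- finish coefficientwise
  apply MvPolynomial.ext
  intro m
  rw [coeff_Hle, coeff_Hle]
  by_cases hm : Finsupp.degree m ≤ i
  · rw [if_pos hm, if_pos hm]
    rw [MvPolynomial.coeff_sub, MvPolynomial.coeff_smul, key m hm]
    have : MvPolynomial.coeff m e = MvPolynomial.coeff m h - MvPolynomial.coeff m f := by
      simp [he]
    rw [this, smul_eq_mul, inv_mul_cancel_left₀ hδne]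
    ring
  · rw [if_neg hm, if_neg hm]
end

section
/- Let F be a field of characteristic zero, let P ∈ F[x₁,…,xₙ,y] be of total degree r and f ∈ F[x₁,…,xₙ] of total degree d, with P(x, f(x)) = 0 and δ := H₀[(∂P/∂y)(x, f(x))] ≠ 0. Let g₀, g₁, …, g_t (with t ≤ d) be the distinct elements of the set G_y(P, H₀[f], d). Then for every i ∈ {1, 2, …, d} there exists a polynomial A_i ∈ F[z₀, z₁, …, z_t] of degree at most i such that H_{≤ i}[f] = H_{≤ i}[A_i(g₀, g₁, …, g_t)]. -/
open Polynomial MvPolynomial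
open scoped Classical

/-- `G_y(P, α, d)`: the set of nonzero polynomials among
`H_{≤d}[(∂ʲP/∂yʲ)(x, α)] − H₀[(∂ʲP/∂yʲ)(x, α)]`, for `j = 0, 1, …, d`,
where `∂ʲ/∂yʲ` is the `j`-th Hasse derivative with respect to `y`. -/
noncomputable def Gset {F : Type*} [CommRing F] {n : ℕ}
    (P : Polynomial (MvPolynomial (Fin n) F)) (α : F) (d : ℕ) :
    Finset (MvPolynomial (Fin n) F) :=
  ((Finset.range (d + 1)).image (fun j =>
      Hle d (Polynomial.eval (MvPolynomial.C α) (Polynomial.hasseDeriv j P)) -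
        MvPolynomial.homogeneousComponent 0
          (Polynomial.eval (MvPolynomial.C α) (Polynomial.hasseDeriv j P)))).filter
    (fun q => q ≠ 0)

/-- The total degree of `P ∈ F[x₁,…,xₙ,y]` (viewed as a polynomial in `y` over
`F[x₁,…,xₙ]`), counting all variables including `y`. -/
noncomputable def totalDegXY {F : Type*} [CommRing F] {n : ℕ}
    (P : Polynomial (MvPolynomial (Fin n) F)) : ℕ :=
  P.support.sup (fun i => i + (P.coeff i).totalDegree)

namespace AuxGen

variable {R : Type*} [CommRing R] {σ : Type*}

/-- the augmentation ideal -/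
noncomputable def mI (σ : Type*) (R : Type*) [CommRing R] : Ideal (MvPolynomial σ R) :=
  RingHom.ker (MvPolynomial.constantCoeff : MvPolynomial σ R →+* R)

lemma mem_mI {p : MvPolynomial σ R} : p ∈ mI σ R ↔ constantCoeff p = 0 :=
  RingHom.mem_ker

lemma degree_add (u v : σ →₀ ℕ) : (u + v).degree = u.degree + v.degree := by
  classical
  simp only [Finsupp.degree_eq_weight_one, map_add]

lemma coeff_eq_zero_of_mem_pow : ∀ (k : ℕ) (p : MvPolynomial σ R), p ∈ (mI σ R) ^ k →
    ∀ e : σ →₀ ℕ, e.degree < k → MvPolynomial.coeff e p = 0 := by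
  intro k
  induction k with
  | zero => intro p hp e he; omega
  | succ k ih =>
    intro p hp e he
    rw [pow_succ] at hp
    revert e he
    refine Submodule.mul_induction_on hp ?_ ?_
    · intro a ha b hb e he
      rw [MvPolynomial.coeff_mul]
      apply Finset.sum_eq_zero
      rintro ⟨u, v⟩ huv
      rw [Finset.HasAntidiagonal.mem_antidiagonal] at huv
      by_cases hv : v = 0
      · subst hv
        have hb0 : MvPolynomial.coeff 0 b = 0 := mem_mI.1 hb
        simp [hb0]
      · have hv1 : 1 ≤ v.degree := by
          rcases Nat.eq_zero_or_pos v.degree with h0 | h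
          · exact absurd ((Finsupp.degree_eq_zero_iff v).1 h0) hv
          · exact h
        have hu : u.degree < k := by
          have hd : (u + v).degree = u.degree + v.degree := degree_add u v
          rw [huv] at hd
          omega
        rw [ih a ha u hu, zero_mul]
    · intro x y hx hy e he
      rw [MvPolynomial.coeff_add, hx e he, hy e he, add_zero]

lemma prod_pow_mem (I : Ideal R) (x : σ → R) (hx : ∀ l, x l ∈ I) (v : σ →₀ ℕ)
    (s : Finset σ) : (∏ l ∈ s, x l ^ v l) ∈ I ^ (∑ l ∈ s, v l) := by
  classical
  induction s using Finset.induction with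
  | empty => simp [Ideal.one_eq_top]
  | insert _ _ h ih =>
    rw [Finset.prod_insert h, Finset.sum_insert h, pow_add]
    exact Ideal.mul_mem_mul (Ideal.pow_mem_pow (hx _) _) ih

lemma mem_pow_of_coeff_eq_zero {k : ℕ} {p : MvPolynomial σ R}
    (h : ∀ e : σ →₀ ℕ, e.degree < k → coeff e p = 0) : p ∈ (mI σ R) ^ k := by
  classical
  rw [MvPolynomial.as_sum p]
  apply Ideal.sum_mem
  intro v hv
  have hdeg : k ≤ v.degree := by
    by_contra h'
    push_neg at h'
    exact (MvPolynomial.mem_support_iff.1 hv) (h v h')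
  rw [MvPolynomial.monomial_eq]
  apply Ideal.mul_mem_left
  have hX : ∀ l : σ, (X l : MvPolynomial σ R) ∈ mI σ R := by
    intro l; rw [mem_mI]; simp
  have hp := prod_pow_mem (mI σ R) X hX v v.support
  rw [Finsupp.prod]
  exact Ideal.pow_le_pow_right hdeg hp

lemma aeval_mem_pow {F : Type*} [CommRing F] {τ : Type*} {k : ℕ}
    (g : τ → MvPolynomial σ F) (hg : ∀ j, constantCoeff (g j) = 0)
    {B : MvPolynomial τ F} (h : ∀ e : τ →₀ ℕ, e.degree < k → coeff e B = 0) :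
    MvPolynomial.aeval g B ∈ (mI σ F) ^ k := by
  classical
  rw [MvPolynomial.aeval_def, MvPolynomial.eval₂_eq]
  apply Ideal.sum_mem
  intro v hv
  have hdeg : k ≤ v.degree := by
    by_contra h'
    push_neg at h'
    exact (MvPolynomial.mem_support_iff.1 hv) (h v h')
  apply Ideal.mul_mem_left
  have hp := prod_pow_mem (mI σ F) g (fun l => mem_mI.2 (hg l)) v v.support
  exact Ideal.pow_le_pow_right hdeg hp

lemma coeff_Hle (k : ℕ) (p : MvPolynomial σ R) (e : σ →₀ ℕ) :
    coeff e (Hle k p) = if e.degree ≤ k then coeff e p else 0 := by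
  unfold Hle
  rw [MvPolynomial.coeff_sum]
  simp only [MvPolynomial.coeff_homogeneousComponent]
  rw [Finset.sum_ite_eq]
  simp [Finset.mem_range, Nat.lt_succ_iff]

lemma Hle_sub (k : ℕ) (p q : MvPolynomial σ R) : Hle k (p - q) = Hle k p - Hle k q := by
  unfold Hle
  rw [← Finset.sum_sub_distrib]
  exact Finset.sum_congr rfl fun i _ => map_sub _ _ _

lemma Hle_eq_zero_of_mem {k : ℕ} {p : MvPolynomial σ R} (h : p ∈ (mI σ R) ^ (k + 1)) :
    Hle k p = 0 := by
  apply MvPolynomial.ext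
  intro e
  rw [coeff_Hle]
  split
  · next he => exact coeff_eq_zero_of_mem_pow _ p h e (by omega)
  · simp

lemma sub_Hle_mem (k : ℕ) (p : MvPolynomial σ R) : p - Hle k p ∈ (mI σ R) ^ (k + 1) := by
  apply mem_pow_of_coeff_eq_zero
  intro e he
  rw [MvPolynomial.coeff_sub, coeff_Hle, if_pos (by omega), sub_self]

lemma constantCoeff_Hle_sub_H0 (k : ℕ) (p : MvPolynomial σ R) :
    constantCoeff (Hle k p - homogeneousComponent 0 p) = 0 := by
  rw [map_sub, MvPolynomial.homogeneousComponent_zero, MvPolynomial.constantCoeff_C,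
    MvPolynomial.constantCoeff_eq]
  rw [coeff_Hle, if_pos (by simp [map_zero])]
  simp [MvPolynomial.constantCoeff_eq]

noncomputable def trunc {τ : Type*} (k : ℕ) (B : MvPolynomial τ R) : MvPolynomial τ R :=
  ∑ v ∈ B.support.filter (fun v => v.degree ≤ k), monomial v (coeff v B)

lemma coeff_trunc {τ : Type*} (k : ℕ) (B : MvPolynomial τ R) (e : τ →₀ ℕ) :
    coeff e (trunc k B) = if e.degree ≤ k then coeff e B else 0 := by
  classical
  unfold trunc
  rw [MvPolynomial.coeff_sum]
  simp only [MvPolynomial.coeff_monomial]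
  rw [Finset.sum_ite_eq']
  by_cases h1 : e.degree ≤ k
  · by_cases h2 : coeff e B = 0
    · simp [h2, Finset.mem_filter, MvPolynomial.mem_support_iff]
    · simp [Finset.mem_filter, MvPolynomial.mem_support_iff, h1, h2]
  · simp [Finset.mem_filter, h1]

lemma totalDegree_trunc_le {τ : Type*} (k : ℕ) (B : MvPolynomial τ R) :
    (trunc k B).totalDegree ≤ k := by
  classical
  unfold trunc
  refine le_trans (MvPolynomial.totalDegree_finset_sum _ _) ?_
  apply Finset.sup_le
  intro v hv
  rw [Finset.mem_filter] at hv
  exact le_trans (MvPolynomial.totalDegree_monomial_le _ _) hv.2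

lemma pow_sub_pow_mem (I J : Ideal R) {a b : R} (ha : a ∈ I) (hb : b ∈ I) (hab : a - b ∈ J) :
    ∀ j : ℕ, 1 ≤ j → a ^ j - b ^ j ∈ I ^ (j - 1) * J := by
  intro j
  induction j with
  | zero => omega
  | succ j ih =>
    intro _
    rcases Nat.eq_zero_or_pos j with h0 | hj
    · subst h0
      simpa [Ideal.one_eq_top, Ideal.top_mul] using hab
    · simp only [Nat.add_sub_cancel]
      have h1 : a ^ (j + 1) - b ^ (j + 1) = a * (a ^ j - b ^ j) + (a - b) * b ^ j := by ring
      rw [h1]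
      refine Submodule.add_mem _ ?_ ?_
      · have h2 : a * (a ^ j - b ^ j) ∈ I * (I ^ (j - 1) * J) := Ideal.mul_mem_mul ha (ih hj)
        have h3 : I * (I ^ (j - 1) * J) = I ^ j * J := by
          rw [← mul_assoc, ← pow_succ']
          congr 2
          omega
        rwa [h3] at h2
      · have h2 : (a - b) * b ^ j ∈ J * I ^ j := Ideal.mul_mem_mul hab (Ideal.pow_mem_pow hb j)
        rwa [mul_comm J] at h2

lemma constantCoeff_polyEval (x : MvPolynomial σ R) (p : Polynomial (MvPolynomial σ R)) :
    constantCoeff (Polynomial.eval x p) =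
      Polynomial.eval (constantCoeff x)
        (p.map (MvPolynomial.constantCoeff : MvPolynomial σ R →+* R)) := by
  rw [Polynomial.eval_eq_sum_range (x := x),
    Polynomial.eval_eq_sum_range' (lt_of_le_of_lt Polynomial.natDegree_map_le
      (Nat.lt_succ_self _))]
  rw [map_sum]
  refine Finset.sum_congr rfl fun j _ => ?_
  rw [map_mul, map_pow, Polynomial.coeff_map]

end AuxGen

/-- If `P(x, f) = 0` and `δ = H₀[(∂P/∂y)(x, f)] ≠ 0`, and `g₀, …, g_t` are the
distinct elements of `G_y(P, H₀[f], d)` (with `t ≤ d`), then for every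
`1 ≤ i ≤ d` there is a polynomial `A_i` in `t+1` variables of degree at most `i`
with `H_{≤i}[f] = H_{≤i}[A_i(g₀, …, g_t)]`. -/
theorem exists_generator_representation {F : Type*} [Field F] [CharZero F] {n : ℕ}
    (P : Polynomial (MvPolynomial (Fin n) F)) (f : MvPolynomial (Fin n) F)
    (r d : ℕ) (hr : totalDegXY P = r) (hd : f.totalDegree = d)
    (hroot : Polynomial.eval f P = 0)
    (δ : F)
    (hδ : δ = MvPolynomial.constantCoeff
        (Polynomial.eval f (Polynomial.hasseDeriv 1 P)))
    (hδne : δ ≠ 0)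
    (t : ℕ) (ht : t ≤ d)
    (g : Fin (t + 1) → MvPolynomial (Fin n) F)
    (hginj : Function.Injective g)
    (hgrange : ∀ q, q ∈ Gset P (MvPolynomial.constantCoeff f) d ↔ ∃ j, g j = q) :
    ∀ i, 1 ≤ i → i ≤ d →
      ∃ A : MvPolynomial (Fin (t + 1)) F, A.totalDegree ≤ i ∧
        Hle i f = Hle i (MvPolynomial.aeval g A) := by
  classical
  set α : F := MvPolynomial.constantCoeff f with hα
  set m : Ideal (MvPolynomial (Fin n) F) := AuxGen.mI (Fin n) F with hm
  set Q : ℕ → MvPolynomial (Fin n) F :=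
    fun j => Polynomial.eval (MvPolynomial.C α) (Polynomial.hasseDeriv j P) with hQ
  set q : ℕ → MvPolynomial (Fin n) F :=
    fun j => Hle d (Q j) - MvPolynomial.homogeneousComponent 0 (Q j) with hq
  set c : ℕ → F := fun j => MvPolynomial.constantCoeff (Q j) with hc
  -- basic facts
  have hg0 : ∀ idx, MvPolynomial.constantCoeff (g idx) = 0 := by
    intro idx
    have hmem := (hgrange (g idx)).2 ⟨idx, rfl⟩
    simp only [Gset, Finset.mem_filter, Finset.mem_image] at hmem
    obtain ⟨⟨j, _, hje⟩, _⟩ := hmem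
    rw [← hje]
    exact AuxGen.constantCoeff_Hle_sub_H0 _ _
  have hqc : ∀ j, MvPolynomial.constantCoeff (q j) = 0 := by
    intro j
    simp only [hq]
    exact AuxGen.constantCoeff_Hle_sub_H0 _ _
  have hCq : ∀ j, MvPolynomial.C (c j) + q j = Hle d (Q j) := by
    intro j
    simp only [hq, hc, MvPolynomial.homogeneousComponent_zero, MvPolynomial.constantCoeff_eq]
    ring
  have hc1 : c 1 = δ := by
    rw [hδ]
    simp only [hc, hQ]
    rw [AuxGen.constantCoeff_polyEval, AuxGen.constantCoeff_polyEval,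
      MvPolynomial.constantCoeff_C, hα]
  -- choice of preimages
  have hzeta : ∀ j : ℕ, ∃ z : MvPolynomial (Fin (t + 1)) F,
      j ≤ d → MvPolynomial.aeval g z = q j := by
    intro j
    by_cases hex : ∃ idx, g idx = q j
    · exact ⟨MvPolynomial.X hex.choose, fun _ => by simp [hex.choose_spec]⟩
    · refine ⟨0, fun hjd => ?_⟩
      have hq0 : q j = 0 := by
        by_contra hne
        apply hex
        apply (hgrange (q j)).1
        simp only [hq, hQ, Gset, Finset.mem_filter, Finset.mem_image]
        exact ⟨⟨j, Finset.mem_range.2 (by omega), rfl⟩, hne⟩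
      simp [hq0]
  choose z hz using hzeta
  -- the main induction
  have key : ∀ i, i ≤ d → ∃ A : MvPolynomial (Fin (t + 1)) F, A.totalDegree ≤ i ∧
      f - MvPolynomial.aeval g A ∈ m ^ (i + 1) := by
    intro i
    induction i with
    | zero =>
      intro _
      refine ⟨MvPolynomial.C α, by simp, ?_⟩
      rw [pow_one, hm, AuxGen.mem_mI]
      simp [MvPolynomial.algebraMap_eq, hα]
    | succ i ih =>
      intro hid
      obtain ⟨A, hAdeg, hA⟩ := ih (by omega)
      set F' : MvPolynomial (Fin n) F := MvPolynomial.aeval g A with hF'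
      have hmle : ∀ {a b : ℕ}, a ≤ b → m ^ b ≤ m ^ a := fun h => Ideal.pow_le_pow_right h
      have hwmem : f - MvPolynomial.C α ∈ m := by
        rw [hm, AuxGen.mem_mI]
        simp [hα]
      have hw'mem : F' - MvPolynomial.C α ∈ m := by
        have h1 : F' - MvPolynomial.C α = (f - MvPolynomial.C α) - (f - F') := by ring
        rw [h1]
        refine sub_mem hwmem ?_
        have h2 := hmle (show 1 ≤ i + 1 by omega) hA
        rwa [pow_one] at h2
      -- Taylor expansion
      set M := max (P.natDegree + 1) (i + 2) with hM
      have hMgt : P.natDegree < M := lt_of_lt_of_le (Nat.lt_succ_self _) (le_max_left _ _)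
      have htay : (0 : MvPolynomial (Fin n) F) =
          ∑ j ∈ Finset.range M, Q j * (f - MvPolynomial.C α) ^ j := by
        rw [← hroot]
        conv_lhs => rw [← Polynomial.taylor_eval_sub (MvPolynomial.C α) P f]
        rw [Polynomial.eval_eq_sum_range' (by rw [Polynomial.natDegree_taylor]; exact hMgt)]
        refine Finset.sum_congr rfl fun j _ => ?_
        rw [Polynomial.taylor_coeff]
      have htail : (∑ j ∈ Finset.Ico (i + 2) M, Q j * (f - MvPolynomial.C α) ^ j)
          ∈ m ^ (i + 2) := by
        apply Ideal.sum_mem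
        intro j hj
        apply Ideal.mul_mem_left
        exact hmle (Finset.mem_Ico.1 hj).1 (Ideal.pow_mem_pow hwmem j)
      have hS : (∑ j ∈ Finset.range (i + 2), Q j * (f - MvPolynomial.C α) ^ j)
          ∈ m ^ (i + 2) := by
        have hsplit : (∑ j ∈ Finset.range (i + 2), Q j * (f - MvPolynomial.C α) ^ j)
            + ∑ j ∈ Finset.Ico (i + 2) M, Q j * (f - MvPolynomial.C α) ^ j
            = ∑ j ∈ Finset.range M, Q j * (f - MvPolynomial.C α) ^ j := by
          simp only [Finset.range_eq_Ico]
          exact Finset.sum_Ico_consecutive _ (by omega) (le_max_right _ _)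
        have h0 : (∑ j ∈ Finset.range (i + 2), Q j * (f - MvPolynomial.C α) ^ j)
            = - ∑ j ∈ Finset.Ico (i + 2) M, Q j * (f - MvPolynomial.C α) ^ j := by
          have h1 := htay
          rw [← hsplit] at h1
          exact eq_neg_of_add_eq_zero_left h1.symm
        rw [h0]
        exact neg_mem htail
      have hQsub : ∀ j, Q j - (MvPolynomial.C (c j) + q j) ∈ m ^ (d + 1) := by
        intro j
        rw [hCq j, hm]
        exact AuxGen.sub_Hle_mem d (Q j)
      have hS2 : (∑ j ∈ Finset.range (i + 2),
          (MvPolynomial.C (c j) + q j) * (f - MvPolynomial.C α) ^ j) ∈ m ^ (i + 2) := by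
        have hdiff : (∑ j ∈ Finset.range (i + 2), Q j * (f - MvPolynomial.C α) ^ j)
            - (∑ j ∈ Finset.range (i + 2),
                (MvPolynomial.C (c j) + q j) * (f - MvPolynomial.C α) ^ j)
            = ∑ j ∈ Finset.range (i + 2),
                (Q j - (MvPolynomial.C (c j) + q j)) * (f - MvPolynomial.C α) ^ j := by
          rw [← Finset.sum_sub_distrib]
          exact Finset.sum_congr rfl fun j _ => by ring
        have hmemd : (∑ j ∈ Finset.range (i + 2),
            (Q j - (MvPolynomial.C (c j) + q j)) * (f - MvPolynomial.C α) ^ j)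
            ∈ m ^ (i + 2) := by
          apply Ideal.sum_mem
          intro j _
          exact Ideal.mul_mem_right _ _ (hmle (by omega) (hQsub j))
        have heq : (∑ j ∈ Finset.range (i + 2),
            (MvPolynomial.C (c j) + q j) * (f - MvPolynomial.C α) ^ j)
            = (∑ j ∈ Finset.range (i + 2), Q j * (f - MvPolynomial.C α) ^ j)
              - ∑ j ∈ Finset.range (i + 2),
                  (Q j - (MvPolynomial.C (c j) + q j)) * (f - MvPolynomial.C α) ^ j := by
          rw [← hdiff]
          ring
        rw [heq]
        exact sub_mem hS hmemd
      have hsplit2 : (∑ j ∈ Finset.range (i + 2),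
          (MvPolynomial.C (c j) + q j) * (f - MvPolynomial.C α) ^ j)
          = MvPolynomial.C δ * (f - MvPolynomial.C α)
            + ((MvPolynomial.C (c 0) + q 0) + q 1 * (f - MvPolynomial.C α)
              + ∑ j ∈ Finset.Ico 2 (i + 2),
                  (MvPolynomial.C (c j) + q j) * (f - MvPolynomial.C α) ^ j) := by
        have h2 : (∑ j ∈ Finset.range 2,
            (MvPolynomial.C (c j) + q j) * (f - MvPolynomial.C α) ^ j)
            + ∑ j ∈ Finset.Ico 2 (i + 2),
                (MvPolynomial.C (c j) + q j) * (f - MvPolynomial.C α) ^ j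
            = ∑ j ∈ Finset.range (i + 2),
                (MvPolynomial.C (c j) + q j) * (f - MvPolynomial.C α) ^ j := by
          simp only [Finset.range_eq_Ico]
          exact Finset.sum_Ico_consecutive _ (by omega) (by omega)
        rw [← h2, Finset.sum_range_succ, Finset.sum_range_one, hc1]
        ring
      have hT2 : MvPolynomial.C δ * (f - MvPolynomial.C α)
          + ((MvPolynomial.C (c 0) + q 0) + q 1 * (F' - MvPolynomial.C α)
            + ∑ j ∈ Finset.Ico 2 (i + 2),
                (MvPolynomial.C (c j) + q j) * (F' - MvPolynomial.C α) ^ j)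
          ∈ m ^ (i + 2) := by
        have hdiffsum : ∀ j ∈ Finset.Ico 2 (i + 2),
            (MvPolynomial.C (c j) + q j) *
              ((f - MvPolynomial.C α) ^ j - (F' - MvPolynomial.C α) ^ j) ∈ m ^ (i + 2) := by
          intro j hj
          obtain ⟨hj2, hj3⟩ := Finset.mem_Ico.1 hj
          apply Ideal.mul_mem_left
          have hsub : (f - MvPolynomial.C α) - (F' - MvPolynomial.C α) ∈ m ^ (i + 1) := by
            have h1 : (f - MvPolynomial.C α) - (F' - MvPolynomial.C α) = f - F' := by ring
            rw [h1]
            exact hA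
          have hppow := AuxGen.pow_sub_pow_mem m (m ^ (i + 1)) hwmem hw'mem hsub j (by omega)
          have hle1 : m ^ (j - 1) * m ^ (i + 1) ≤ m ^ (i + 2) := by
            have e1 : m ^ (j - 1) ≤ m ^ 1 := hmle (by omega)
            calc m ^ (j - 1) * m ^ (i + 1) ≤ m ^ 1 * m ^ (i + 1) := Ideal.mul_mono_left e1
              _ = m ^ (i + 2) := by rw [pow_one, ← pow_succ']
          exact hle1 hppow
        have hq1 : q 1 * ((f - MvPolynomial.C α) - (F' - MvPolynomial.C α)) ∈ m ^ (i + 2) := by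
          have h1 : (f - MvPolynomial.C α) - (F' - MvPolynomial.C α) = f - F' := by ring
          have h2 : q 1 * (f - F') = (f - F') * q 1 := mul_comm _ _
          rw [h1, h2, pow_succ]
          refine Ideal.mul_mem_mul hA ?_
          rw [hm, AuxGen.mem_mI]
          exact hqc 1
        have hmerge : (∑ j ∈ Finset.Ico 2 (i + 2),
            (MvPolynomial.C (c j) + q j) *
              ((f - MvPolynomial.C α) ^ j - (F' - MvPolynomial.C α) ^ j))
            = (∑ j ∈ Finset.Ico 2 (i + 2),
                (MvPolynomial.C (c j) + q j) * (f - MvPolynomial.C α) ^ j)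
              - ∑ j ∈ Finset.Ico 2 (i + 2),
                  (MvPolynomial.C (c j) + q j) * (F' - MvPolynomial.C α) ^ j := by
          rw [← Finset.sum_sub_distrib]
          exact Finset.sum_congr rfl fun j _ => by ring
        have hcomb : MvPolynomial.C δ * (f - MvPolynomial.C α)
            + ((MvPolynomial.C (c 0) + q 0) + q 1 * (F' - MvPolynomial.C α)
              + ∑ j ∈ Finset.Ico 2 (i + 2),
                  (MvPolynomial.C (c j) + q j) * (F' - MvPolynomial.C α) ^ j)
            = (∑ j ∈ Finset.range (i + 2),
                (MvPolynomial.C (c j) + q j) * (f - MvPolynomial.C α) ^ j)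
              - (q 1 * ((f - MvPolynomial.C α) - (F' - MvPolynomial.C α))
                + ∑ j ∈ Finset.Ico 2 (i + 2),
                    (MvPolynomial.C (c j) + q j) *
                      ((f - MvPolynomial.C α) ^ j - (F' - MvPolynomial.C α) ^ j)) := by
          rw [hsplit2, hmerge]
          ring
        rw [hcomb]
        exact sub_mem hS2 (add_mem hq1 (Ideal.sum_mem _ hdiffsum))
      -- build the new representing polynomial
      set B : MvPolynomial (Fin (t + 1)) F :=
        MvPolynomial.C α - MvPolynomial.C δ⁻¹ *
          ((MvPolynomial.C (c 0) + z 0) + z 1 * (A - MvPolynomial.C α)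
            + ∑ j ∈ Finset.Ico 2 (i + 2),
                (MvPolynomial.C (c j) + z j) * (A - MvPolynomial.C α) ^ j) with hB
      have haB : MvPolynomial.aeval g B = MvPolynomial.C α - MvPolynomial.C δ⁻¹ *
          ((MvPolynomial.C (c 0) + q 0) + q 1 * (F' - MvPolynomial.C α)
            + ∑ j ∈ Finset.Ico 2 (i + 2),
                (MvPolynomial.C (c j) + q j) * (F' - MvPolynomial.C α) ^ j) := by
        simp only [hB, map_sub, map_mul, map_add, map_sum, map_pow, MvPolynomial.aeval_C,
          MvPolynomial.algebraMap_eq]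
        rw [hz 0 (by omega), hz 1 (by omega), ← hF']
        have hsum : (∑ x ∈ Finset.Ico 2 (i + 2),
            (MvPolynomial.C (c x) + MvPolynomial.aeval g (z x)) * (F' - MvPolynomial.C α) ^ x)
            = ∑ j ∈ Finset.Ico 2 (i + 2),
                (MvPolynomial.C (c j) + q j) * (F' - MvPolynomial.C α) ^ j := by
          refine Finset.sum_congr rfl fun j hj => ?_
          obtain ⟨hj2, hj3⟩ := Finset.mem_Ico.1 hj
          rw [hz j (by omega)]
        rw [hsum]
      have hfB : f - MvPolynomial.aeval g B ∈ m ^ (i + 2) := by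
        have hCC : MvPolynomial.C (δ⁻¹) * MvPolynomial.C δ = (1 : MvPolynomial (Fin n) F) := by
          rw [← MvPolynomial.C_mul, inv_mul_cancel₀ hδne, MvPolynomial.C_1]
        have heq : f - MvPolynomial.aeval g B = MvPolynomial.C δ⁻¹ *
            (MvPolynomial.C δ * (f - MvPolynomial.C α)
              + ((MvPolynomial.C (c 0) + q 0) + q 1 * (F' - MvPolynomial.C α)
                + ∑ j ∈ Finset.Ico 2 (i + 2),
                    (MvPolynomial.C (c j) + q j) * (F' - MvPolynomial.C α) ^ j)) := by
          rw [haB]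
          linear_combination (MvPolynomial.C α - f) * hCC
        rw [heq]
        exact Ideal.mul_mem_left _ _ hT2
      refine ⟨AuxGen.trunc (i + 1) B, AuxGen.totalDegree_trunc_le _ _, ?_⟩
      have hBt : MvPolynomial.aeval g (B - AuxGen.trunc (i + 1) B) ∈ m ^ (i + 2) := by
        rw [hm]
        apply AuxGen.aeval_mem_pow g hg0
        intro e he
        rw [MvPolynomial.coeff_sub, AuxGen.coeff_trunc, if_pos (by omega), sub_self]
      have hfin : f - MvPolynomial.aeval g (AuxGen.trunc (i + 1) B)
          = (f - MvPolynomial.aeval g B)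
            + MvPolynomial.aeval g (B - AuxGen.trunc (i + 1) B) := by
        rw [show MvPolynomial.aeval g (B - AuxGen.trunc (i + 1) B)
            = MvPolynomial.aeval g B - MvPolynomial.aeval g (AuxGen.trunc (i + 1) B)
          from map_sub _ _ _, sub_add_sub_cancel]
      rw [hfin]
      exact add_mem hfB hBt
  -- conclude
  intro i hi1 hid
  obtain ⟨A, hAdeg, hAmem⟩ := key i hid
  refine ⟨A, hAdeg, ?_⟩
  have h0 : Hle i (f - MvPolynomial.aeval g A) = 0 := by
    rw [hm] at hAmem
    exact AuxGen.Hle_eq_zero_of_mem hAmem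
  rw [AuxGen.Hle_sub] at h0
  exact sub_eq_zero.1 h0
end

section
/- Let F be a field of characteristic zero, let P ∈ F[x₁,…,xₙ,y] be a polynomial and α ∈ F be such that P(0, α) = 0 and (∂P/∂y)(0, α) ≠ 0, and let k ∈ ℕ. Let g₀, g₁, …, g_t (with t ≤ k) be the distinct elements of the set G_y(P, α, k), and let h_k ∈ F[x₁,…,xₙ] be the unique polynomial with deg(h_k) ≤ k, h_k(0) = α and H_{≤k}[P(x, h_k(x))] = 0. Then there exists a polynomial A_k ∈ F[z₀, z₁, …, z_t] of degree at most k such that h_k = H_{≤k}[A_k(g₀, g₁, …, g_t)]. -/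
open Polynomial MvPolynomial
open scoped Classical

namespace ApproxRoot

variable {F : Type*} [CommRing F] {σ : Type*}

/-- The ideal of polynomials all of whose monomials have degree at least `m`. -/
def ordSet (m : ℕ) : Set (MvPolynomial σ F) :=
  {f | ∀ d ∈ f.support, m ≤ d.degree}

lemma mem_ordSet {m : ℕ} {f : MvPolynomial σ F} :
    f ∈ ordSet (F := F) (σ := σ) m ↔ ∀ d, coeff d f ≠ 0 → m ≤ d.degree := by
  simp [ordSet, MvPolynomial.mem_support_iff]

lemma ordSet_mul {a b : ℕ} {f g : MvPolynomial σ F}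
    (hf : f ∈ ordSet (F := F) (σ := σ) a) (hg : g ∈ ordSet (F := F) (σ := σ) b) :
    f * g ∈ ordSet (F := F) (σ := σ) (a + b) := by
  rw [mem_ordSet] at *
  intro d hd
  rw [MvPolynomial.coeff_mul] at hd
  obtain ⟨⟨u, v⟩, huv, hne⟩ := Finset.exists_ne_zero_of_sum_ne_zero hd
  rw [Finset.HasAntidiagonal.mem_antidiagonal] at huv
  have hu : coeff u f ≠ 0 := fun h => hne (by simp [h])
  have hv : coeff v g ≠ 0 := fun h => hne (by simp [h])
  have : (u + v).degree = u.degree + v.degree := by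
    simp [Finsupp.degree_eq_weight_one, map_add]
  calc a + b ≤ u.degree + v.degree := add_le_add (hf u hu) (hg v hv)
    _ = d.degree := by rw [← this, huv]

/-- The ideal of polynomials all of whose monomials have degree at least `m`. -/
def ordIdeal (m : ℕ) : Ideal (MvPolynomial σ F) where
  carrier := ordSet m
  add_mem' := by
    intro f g hf hg
    rw [mem_ordSet] at *
    intro d hd
    rw [MvPolynomial.coeff_add] at hd
    by_cases h : coeff d f = 0
    · exact hg d (by intro h'; apply hd; rw [h, h']; ring)
    · exact hf d h
  zero_mem' := by intro d hd; simp at hd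
  smul_mem' := by
    intro c f hf
    have := ordSet_mul (a := 0) (b := m) (f := c) (g := f) (by rw [mem_ordSet]; simp) hf
    simpa using this

lemma mem_ordIdeal {m : ℕ} {f : MvPolynomial σ F} :
    f ∈ ordIdeal (F := F) (σ := σ) m ↔ ∀ d, coeff d f ≠ 0 → m ≤ d.degree := mem_ordSet

lemma ordIdeal_mul_mem {a b : ℕ} {f g : MvPolynomial σ F}
    (hf : f ∈ ordIdeal (F := F) (σ := σ) a) (hg : g ∈ ordIdeal (F := F) (σ := σ) b) :
    f * g ∈ ordIdeal (F := F) (σ := σ) (a + b) := ordSet_mul hf hg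

lemma ordIdeal_antitone {a b : ℕ} (h : a ≤ b) :
    ordIdeal (F := F) (σ := σ) b ≤ ordIdeal (F := F) (σ := σ) a := by
  intro f hf
  rw [mem_ordIdeal] at *
  exact fun d hd => le_trans h (hf d hd)

lemma ordIdeal_pow_mem {a j : ℕ} {f : MvPolynomial σ F}
    (hf : f ∈ ordIdeal (F := F) (σ := σ) a) : f ^ j ∈ ordIdeal (F := F) (σ := σ) (j * a) := by
  induction j with
  | zero => rw [mem_ordIdeal]; intro d hd; simp
  | succ j ih =>
      have := ordIdeal_mul_mem ih hf
      rw [pow_succ]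
      convert this using 2
      ring

lemma mem_ordIdeal_one_iff {f : MvPolynomial σ F} :
    f ∈ ordIdeal (F := F) (σ := σ) 1 ↔ constantCoeff f = 0 := by
  rw [mem_ordIdeal, constantCoeff_eq]
  constructor
  · intro h
    by_contra hc
    simpa using h 0 hc
  · intro h d hd
    rcases Nat.eq_zero_or_pos d.degree with h0 | h1
    · rw [(Finsupp.degree_eq_zero_iff d).mp h0] at hd; exact absurd h hd
    · exact h1


variable {F : Type*} [CommRing F] {σ : Type*}

lemma coeff_Hle (k : ℕ) (f : MvPolynomial σ F) (d : σ →₀ ℕ) :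
    coeff d (Hle k f) = if d.degree ≤ k then coeff d f else 0 := by
  rw [Hle]
  rw [MvPolynomial.coeff_sum]
  simp_rw [coeff_homogeneousComponent]
  by_cases h : d.degree ≤ k
  · rw [if_pos h, Finset.sum_ite_eq (Finset.range (k+1)) d.degree (fun _ => coeff d f)]
    rw [if_pos (Finset.mem_range.mpr (Nat.lt_succ_of_le h))]
  · rw [if_neg h]
    apply Finset.sum_eq_zero
    intro i hi
    rw [Finset.mem_range] at hi
    rw [if_neg]
    omega

lemma Hle_add (k : ℕ) (f g : MvPolynomial σ F) : Hle k (f + g) = Hle k f + Hle k g := by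
  simp [Hle, map_add, Finset.sum_add_distrib]

lemma Hle_eq_zero_iff {k : ℕ} {f : MvPolynomial σ F} :
    Hle k f = 0 ↔ f ∈ ordIdeal (F := F) (σ := σ) (k + 1) := by
  rw [mem_ordIdeal, MvPolynomial.ext_iff]
  constructor
  · intro h d hd
    have := h d
    rw [coeff_Hle, MvPolynomial.coeff_zero] at this
    by_contra hc
    rw [if_pos (by omega)] at this
    exact hd this
  · intro h d
    rw [coeff_Hle, MvPolynomial.coeff_zero]
    split_ifs with hd
    · by_contra hc
      have := h d hc
      omega
    · rfl

lemma sub_Hle_mem (k : ℕ) (f : MvPolynomial σ F) :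
    f - Hle k f ∈ ordIdeal (F := F) (σ := σ) (k + 1) := by
  rw [mem_ordIdeal]
  intro d hd
  rw [MvPolynomial.coeff_sub, coeff_Hle] at hd
  by_contra hc
  rw [if_pos (by omega), sub_self] at hd
  exact hd rfl

lemma Hle_congr {k : ℕ} {f g : MvPolynomial σ F}
    (h : f - g ∈ ordIdeal (F := F) (σ := σ) (k + 1)) : Hle k f = Hle k g := by
  rw [mem_ordIdeal] at h
  apply MvPolynomial.ext
  intro d
  rw [coeff_Hle, coeff_Hle]
  split_ifs with hd
  · by_contra hc
    have : coeff d (f - g) ≠ 0 := by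
      rw [MvPolynomial.coeff_sub]
      exact fun h' => hc (sub_eq_zero.mp h')
    have := h d this
    omega
  · rfl

lemma totalDegree_Hle_le (k : ℕ) (f : MvPolynomial σ F) : (Hle k f).totalDegree ≤ k := by
  apply Finset.sup_le
  intro d hd
  rw [MvPolynomial.mem_support_iff, coeff_Hle] at hd
  by_contra hc
  rw [if_neg] at hd
  · exact hd rfl
  · exact fun h => hc h

lemma Hle_eq_self {k : ℕ} {f : MvPolynomial σ F} (h : f.totalDegree ≤ k) : Hle k f = f := by
  apply MvPolynomial.ext
  intro d
  rw [coeff_Hle]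
  split_ifs with hd
  · rfl
  · by_contra hc
    have : coeff d f ≠ 0 := fun h' => hc h'.symm
    have := MvPolynomial.le_totalDegree (MvPolynomial.mem_support_iff.mpr this)
    exact hd (le_trans this h)

lemma constantCoeff_Hle (k : ℕ) (f : MvPolynomial σ F) :
    constantCoeff (Hle k f) = constantCoeff f := by
  show coeff 0 (Hle k f) = coeff 0 f
  rw [coeff_Hle, if_pos]
  simp

section NewtonField
variable {F : Type*} [Field F] {σ τ : Type*}
local notation "O" => ordIdeal (F := F) (σ := σ)
local notation "Cm" => MvPolynomial.C (σ := σ) (R := F)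



lemma pow_mem_of_mem_one {f : MvPolynomial σ F} (hf : f ∈ O 1) {j : ℕ} (hj : 1 ≤ j) :
    f ^ j ∈ O 1 := by
  have := ordIdeal_pow_mem (j := j) hf
  rw [mul_one] at this
  exact ordIdeal_antitone hj this

lemma eval_sub_const_mem (q : Polynomial (MvPolynomial σ F)) {W : MvPolynomial σ F}
    (hW : W ∈ O 1) :
    q.eval W - Cm (constantCoeff (q.coeff 0)) ∈ O 1 := by
  rw [Polynomial.eval_eq_sum_range' (Nat.lt_succ_self q.natDegree)]
  rw [Finset.sum_range_succ']
  have h0 : q.coeff 0 * W ^ 0 - Cm (constantCoeff (q.coeff 0)) ∈ O 1 := by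
    rw [pow_zero, mul_one, mem_ordIdeal_one_iff, map_sub, MvPolynomial.constantCoeff_C]
    ring
  have hs : ∑ i ∈ Finset.range q.natDegree, q.coeff (i + 1) * W ^ (i + 1) ∈ O 1 := by
    apply Ideal.sum_mem
    intro i _
    exact Ideal.mul_mem_left _ _ (pow_mem_of_mem_one hW (by omega))
  have := Ideal.add_mem (O 1) hs h0
  convert this using 1
  ring

lemma constantCoeff_eq_of_sub_C_mem {f : MvPolynomial σ F} {c : F}
    (h : f - Cm c ∈ O 1) : constantCoeff f = c := by
  rw [mem_ordIdeal_one_iff, map_sub, MvPolynomial.constantCoeff_C, sub_eq_zero] at h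
  exact h

lemma newton_step (q : Polynomial (MvPolynomial σ F)) {c : F} (hc : c ≠ 0)
    (h1 : q.coeff 1 - Cm c ∈ O 1) {W : MvPolynomial σ F} (hW : W ∈ O 1)
    {m : ℕ} (hm : 1 ≤ m) (hqW : q.eval W ∈ O m) :
    q.eval (W - Cm c⁻¹ * q.eval W) ∈ O (m + 1) := by
  set δ : MvPolynomial σ F := -(Cm c⁻¹ * q.eval W) with hδdef
  have hδ : δ ∈ O m := Submodule.neg_mem _ (Ideal.mul_mem_left _ _ hqW)
  have hsub : W - Cm c⁻¹ * q.eval W = W + δ := by rw [hδdef]; ring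
  rw [hsub]
  -- Taylor expansion
  have htay : q.eval (W + δ) = (taylor W q).eval δ := by
    rw [taylor_eval, add_comm]
  rw [htay, Polynomial.eval_eq_sum_range' (n := q.natDegree + 2)
      (by rw [natDegree_taylor]; omega), Finset.sum_range_succ', Finset.sum_range_succ']
  have e0 : (taylor W q).coeff 0 * δ ^ 0 = q.eval W := by
    rw [taylor_coeff_zero, pow_zero, mul_one]
  have e1 : (taylor W q).coeff (0 + 1) * δ ^ (0 + 1) = (derivative q).eval W * δ := by
    rw [taylor_coeff_one, pow_one]
  rw [e0, e1, add_assoc]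
  have hS : ∑ i ∈ Finset.range q.natDegree, (taylor W q).coeff (i + 1 + 1) * δ ^ (i + 1 + 1)
      ∈ O (m + 1) := by
    apply Ideal.sum_mem
    intro i _
    apply Ideal.mul_mem_left
    have hp : δ ^ (i + 1 + 1) ∈ O ((i + 1 + 1) * m) := ordIdeal_pow_mem hδ
    exact ordIdeal_antitone (by nlinarith) hp
  apply Ideal.add_mem _ hS
  -- main linear term
  have hCc : Cm c⁻¹ * Cm c = (1 : MvPolynomial σ F) := by
    rw [← MvPolynomial.C_mul, inv_mul_cancel₀ hc, MvPolynomial.C_1]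
  have hD1 : Cm c - (derivative q).eval W ∈ O 1 := by
    have hL1 := eval_sub_const_mem (derivative q) hW
    have hc0 : constantCoeff ((derivative q).coeff 0) = c := by
      have hd0 : (derivative q).coeff 0 = q.coeff 1 := by
        rw [Polynomial.coeff_derivative]
        push_cast
        ring
      rw [hd0]
      exact constantCoeff_eq_of_sub_C_mem h1
    rw [hc0] at hL1
    simpa using Submodule.neg_mem _ hL1
  have key : (derivative q).eval W * δ + q.eval W
      = Cm c⁻¹ * ((Cm c - (derivative q).eval W) * q.eval W) := by
    rw [hδdef]
    linear_combination (-(Polynomial.eval W q)) * hCc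
  rw [key]
  apply Ideal.mul_mem_left
  have := ordIdeal_mul_mem hD1 hqW
  exact ordIdeal_antitone (le_of_eq (by omega)) this




lemma deriv_approx (q : Polynomial (MvPolynomial σ F)) {c : F}
    (h1 : q.coeff 1 - Cm c ∈ O 1) {b : MvPolynomial σ F} (hb : b ∈ O 1) :
    Cm c - (derivative q).eval b ∈ O 1 := by
  have hL1 := eval_sub_const_mem (derivative q) hb
  have hc0 : constantCoeff ((derivative q).coeff 0) = c := by
    have hd0 : (derivative q).coeff 0 = q.coeff 1 := by
      rw [Polynomial.coeff_derivative]; push_cast; ring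
    rw [hd0]
    exact constantCoeff_eq_of_sub_C_mem h1
  rw [hc0] at hL1
  simpa using Submodule.neg_mem _ hL1

lemma newton_exists (q : Polynomial (MvPolynomial σ F)) {c : F} (hc : c ≠ 0)
    (h0 : q.coeff 0 ∈ O 1) (h1 : q.coeff 1 - Cm c ∈ O 1) (k : ℕ) :
    ∃ W : MvPolynomial σ F, W ∈ O 1 ∧ W.totalDegree ≤ k ∧ q.eval W ∈ O (k + 1) := by
  suffices h : ∀ m : ℕ, ∃ W : MvPolynomial σ F,
      W ∈ O 1 ∧ W.totalDegree ≤ k ∧ q.eval W ∈ O (min (m + 1) (k + 1)) by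
    obtain ⟨W, hW1, hWd, hWq⟩ := h k
    exact ⟨W, hW1, hWd, by simpa using hWq⟩
  intro m
  induction m with
  | zero =>
      refine ⟨0, ?_, ?_, ?_⟩
      · rw [mem_ordIdeal_one_iff]; simp
      · simp
      · have : q.eval 0 = q.coeff 0 := (Polynomial.coeff_zero_eq_eval_zero q).symm
        rw [this]
        exact ordIdeal_antitone (by omega) h0
  | succ m ih =>
      obtain ⟨W, hW1, hWd, hWq⟩ := ih
      by_cases hmk : k + 1 ≤ m + 1
      · refine ⟨W, hW1, hWd, ?_⟩
        have : min (m + 1) (k + 1) = k + 1 := by omega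
        rw [this] at hWq
        have : min (m + 1 + 1) (k + 1) = k + 1 := by omega
        rw [this]
        exact hWq
      · -- m + 1 ≤ k
        have hmin : min (m + 1) (k + 1) = m + 1 := by omega
        rw [hmin] at hWq
        set V : MvPolynomial σ F := W - Cm c⁻¹ * q.eval W with hVdef
        have hV : q.eval V ∈ O (m + 2) := newton_step q hc h1 hW1 (by omega) hWq
        set W' : MvPolynomial σ F := Hle k V with hW'def
        have hdiff : W' - V ∈ O (m + 2) := by
          have h2 := Submodule.neg_mem _ (sub_Hle_mem k V)
          have h3 : W' - V ∈ O (k + 1) := by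
            rw [hW'def]
            convert h2 using 1
            ring
          exact ordIdeal_antitone (by omega) h3
        have heval : q.eval W' - q.eval V ∈ O (m + 2) := by
          obtain ⟨r, hr⟩ := Polynomial.sub_dvd_eval_sub W' V q
          rw [hr]
          exact Ideal.mul_mem_right _ _ hdiff
        refine ⟨W', ?_, totalDegree_Hle_le k V, ?_⟩
        · rw [mem_ordIdeal_one_iff, hW'def, constantCoeff_Hle, hVdef, map_sub, map_mul,
            MvPolynomial.constantCoeff_C]
          have hqW0 : constantCoeff (q.eval W) = 0 :=
            mem_ordIdeal_one_iff.mp (ordIdeal_antitone (by omega) hWq)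
          have hW0 : constantCoeff W = 0 := mem_ordIdeal_one_iff.mp hW1
          rw [hqW0, hW0]
          ring
        · have hmin2 : min (m + 1 + 1) (k + 1) = m + 2 := by omega
          rw [hmin2]
          have : q.eval W' = (q.eval W' - q.eval V) + q.eval V := by ring
          rw [this]
          exact Ideal.add_mem _ heval hV

lemma newton_unique (q : Polynomial (MvPolynomial σ F)) {c : F} (hc : c ≠ 0)
    (h1 : q.coeff 1 - Cm c ∈ O 1) {a b : MvPolynomial σ F} (ha : a ∈ O 1) (hb : b ∈ O 1)
    (k : ℕ) (hqa : q.eval a ∈ O (k + 1)) (hqb : q.eval b ∈ O (k + 1)) :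
    a - b ∈ O (k + 1) := by
  set d : MvPolynomial σ F := a - b with hddef
  have hd1 : d ∈ O 1 := Submodule.sub_mem _ ha hb
  set N := q.natDegree with hN
  set E : ℕ → MvPolynomial σ F := fun i => (taylor b q).coeff i with hE
  set e : MvPolynomial σ F := ∑ i ∈ Finset.range (N + 1), E (i + 1) * d ^ i with hedef
  have hde : q.eval a - q.eval b = e * d := by
    have htay : q.eval a = (taylor b q).eval d := by
      rw [taylor_eval, hddef]; ring_nf
    rw [htay, Polynomial.eval_eq_sum_range' (n := N + 2) (by rw [natDegree_taylor]; omega),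
      Finset.sum_range_succ']
    have hE0 : E 0 * d ^ 0 = q.eval b := by
      show (taylor b q).coeff 0 * d ^ 0 = q.eval b
      rw [taylor_coeff_zero, pow_zero, mul_one]
    rw [hE0, hedef, Finset.sum_mul]
    simp_rw [mul_assoc, ← pow_succ]
    ring
  have hec : e - Cm c ∈ O 1 := by
    rw [hedef, Finset.sum_range_succ']
    have hE1 : E (0 + 1) * d ^ 0 = (derivative q).eval b := by
      show (taylor b q).coeff (0 + 1) * d ^ 0 = (derivative q).eval b
      rw [pow_zero, mul_one]
      exact taylor_coeff_one b q
    rw [hE1]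
    have hrest : ∑ i ∈ Finset.range N, E (i + 1 + 1) * d ^ (i + 1) ∈ O 1 := by
      apply Ideal.sum_mem
      intro i _
      exact Ideal.mul_mem_left _ _ (pow_mem_of_mem_one hd1 (by omega))
    have hfst : (derivative q).eval b - Cm c ∈ O 1 := by
      have := Submodule.neg_mem _ (deriv_approx q h1 hb)
      simpa using this
    have := Ideal.add_mem _ hrest hfst
    convert this using 1
    ring
  -- bootstrapping
  suffices hloop : ∀ m : ℕ, d ∈ O (min (m + 1) (k + 1)) by
    have := hloop k
    simpa using this
  intro m
  induction m with
  | zero => exact ordIdeal_antitone (by omega) hd1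
  | succ m ih =>
      by_cases hmk : k + 1 ≤ m + 1
      · have h1' : min (m + 1) (k + 1) = k + 1 := by omega
        have h2' : min (m + 1 + 1) (k + 1) = k + 1 := by omega
        rw [h2']; rw [h1'] at ih; exact ih
      · have h1' : min (m + 1) (k + 1) = m + 1 := by omega
        have h2' : min (m + 1 + 1) (k + 1) = m + 2 := by omega
        rw [h1'] at ih
        rw [h2']
        have hCcd : Cm c * d ∈ O (m + 2) := by
          have hsplit : Cm c * d = (q.eval a - q.eval b) - (e - Cm c) * d := by
            rw [hde]; ring
          rw [hsplit]
          apply Submodule.sub_mem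
          · exact ordIdeal_antitone (by omega) (Submodule.sub_mem _ hqa hqb)
          · have := ordIdeal_mul_mem hec ih
            exact ordIdeal_antitone (by omega) this
        have : d = Cm c⁻¹ * (Cm c * d) := by
          rw [← mul_assoc, ← MvPolynomial.C_mul, inv_mul_cancel₀ hc, MvPolynomial.C_1, one_mul]
        rw [this]
        exact Ideal.mul_mem_left _ _ hCcd


end NewtonField

section Hom
variable {F : Type*} [CommRing F] {σ τ : Type*}


lemma prod_pow_mem {g : τ → MvPolynomial σ F} (hg : ∀ i, g i ∈ ordIdeal (F := F) (σ := σ) 1)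
    (d : τ →₀ ℕ) :
    (d.prod fun i e => g i ^ e) ∈ ordIdeal (F := F) (σ := σ) d.degree := by
  rw [Finsupp.prod, Finsupp.degree]
  have : ∀ s : Finset τ, (∏ i ∈ s, g i ^ d i) ∈ ordIdeal (F := F) (σ := σ) (∑ i ∈ s, d i) := by
    intro s
    induction s using Finset.induction_on with
    | empty => rw [mem_ordIdeal]; intro e he; simp
    | @insert a s ha ih =>
        rw [Finset.prod_insert ha, Finset.sum_insert ha]
        have hpow : g a ^ d a ∈ ordIdeal (F := F) (σ := σ) (d a) := by
          have := ordIdeal_pow_mem (j := d a) (hg a)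
          rwa [mul_one] at this
        exact ordIdeal_mul_mem hpow ih
  exact this d.support

lemma aeval_mem {g : τ → MvPolynomial σ F} (hg : ∀ i, g i ∈ ordIdeal (F := F) (σ := σ) 1)
    {m : ℕ} {f : MvPolynomial τ F} (hf : f ∈ ordIdeal (F := F) (σ := τ) m) :
    MvPolynomial.aeval g f ∈ ordIdeal (F := F) (σ := σ) m := by
  have hrepr := congrArg (MvPolynomial.aeval g) (MvPolynomial.as_sum f)
  rw [map_sum] at hrepr
  rw [hrepr]
  apply Ideal.sum_mem
  intro d hd
  rw [MvPolynomial.aeval_monomial]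
  apply Ideal.mul_mem_left
  apply ordIdeal_antitone (mem_ordIdeal.mp hf d (MvPolynomial.mem_support_iff.mp hd))
  exact prod_pow_mem hg d

lemma coeff_sum_C_mul_X_pow (b : ℕ → MvPolynomial σ F) (N i : ℕ) :
    (∑ j ∈ Finset.range N, Polynomial.C (b j) * Polynomial.X ^ j).coeff i
      = if i < N then b i else 0 := by
  rw [Polynomial.finset_sum_coeff]
  simp_rw [Polynomial.coeff_C_mul, Polynomial.coeff_X_pow, mul_ite, mul_one, mul_zero]
  rw [Finset.sum_ite_eq (Finset.range N) i b]
  simp [Finset.mem_range]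

lemma eval_sum_C_mul_X_pow (b : ℕ → MvPolynomial σ F) (N : ℕ) (w : MvPolynomial σ F) :
    (∑ j ∈ Finset.range N, Polynomial.C (b j) * Polynomial.X ^ j).eval w
      = ∑ j ∈ Finset.range N, b j * w ^ j := by
  rw [Polynomial.eval_finset_sum]
  simp


end Hom

end ApproxRoot

/-- If `P(0, α) = 0`, `(∂P/∂y)(0, α) ≠ 0`, `g₀, …, g_t` (`t ≤ k`) are the
distinct elements of `G_y(P, α, k)` and `h_k` is the unique polynomial of
degree at most `k` with `h_k(0) = α` and `H_{≤k}[P(x, h_k(x))] = 0`, then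
there is a polynomial `A_k` in `t+1` variables of degree at most `k` with
`h_k = H_{≤k}[A_k(g₀, …, g_t)]`. -/
theorem approximate_root_generator_representation
    {F : Type*} [Field F] [CharZero F] {n : ℕ}
    (P : Polynomial (MvPolynomial (Fin n) F)) (α : F)
    (hval : MvPolynomial.eval (0 : Fin n → F)
        (Polynomial.eval (MvPolynomial.C α) P) = 0)
    (hder : MvPolynomial.eval (0 : Fin n → F)
        (Polynomial.eval (MvPolynomial.C α) (Polynomial.hasseDeriv 1 P)) ≠ 0)
    (k : ℕ) (t : ℕ) (ht : t ≤ k)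
    (g : Fin (t + 1) → MvPolynomial (Fin n) F)
    (hginj : Function.Injective g)
    (hgrange : ∀ q, q ∈ Gset P α k ↔ ∃ j, g j = q)
    (hk : MvPolynomial (Fin n) F)
    (hkdeg : hk.totalDegree ≤ k)
    (hkval : MvPolynomial.eval (0 : Fin n → F) hk = α)
    (hkroot : Hle k (Polynomial.eval hk P) = 0) :
    ∃ A : MvPolynomial (Fin (t + 1)) F, A.totalDegree ≤ k ∧
      hk = Hle k (MvPolynomial.aeval g A) := by
  classical
  open ApproxRoot in
  set D : ℕ → MvPolynomial (Fin n) F :=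
    fun j => Polynomial.eval (MvPolynomial.C α) (Polynomial.hasseDeriv j P) with hD
  set c : ℕ → F := fun j => MvPolynomial.constantCoeff (D j) with hcdef
  have hceval : ∀ j, c j = MvPolynomial.eval (0 : Fin n → F) (D j) := by
    intro j
    rw [MvPolynomial.eval_zero]
  have hc0 : c 0 = 0 := by
    rw [hceval]
    have : D 0 = Polynomial.eval (MvPolynomial.C α) P := by
      rw [hD]; simp [Polynomial.hasseDeriv_zero]
    rw [this]
    exact hval
  have hc1 : c 1 ≠ 0 := by
    rw [hceval]
    exact hder
  set g' : ℕ → MvPolynomial (Fin n) F :=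
    fun j => Hle k (D j) - MvPolynomial.homogeneousComponent 0 (D j) with hg'def
  have hH0 : ∀ j, MvPolynomial.homogeneousComponent 0 (D j) = MvPolynomial.C (c j) := by
    intro j
    rw [MvPolynomial.homogeneousComponent_zero]
    rfl
  -- the generators have zero constant term
  have hgO : ∀ i, g i ∈ ApproxRoot.ordIdeal (F := F) (σ := Fin n) 1 := by
    intro i
    have hmem : g i ∈ Gset P α k := (hgrange (g i)).mpr ⟨i, rfl⟩
    rw [Gset, Finset.mem_filter, Finset.mem_image] at hmem
    obtain ⟨⟨j, _, hj⟩, _⟩ := hmem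
    rw [ApproxRoot.mem_ordIdeal_one_iff, ← hj, map_sub, ApproxRoot.constantCoeff_Hle,
      MvPolynomial.homogeneousComponent_zero, MvPolynomial.constantCoeff_C,
      MvPolynomial.constantCoeff_eq]
    ring
  -- choose variables representing the generators
  have hZex : ∀ j : ℕ, ∃ z : MvPolynomial (Fin (t + 1)) F,
      z ∈ ApproxRoot.ordIdeal (F := F) (σ := Fin (t + 1)) 1 ∧
        (j ≤ k → MvPolynomial.aeval g z = g' j) := by
    intro j
    by_cases hj : j ≤ k ∧ g' j ≠ 0
    · have hmem : g' j ∈ Gset P α k := by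
        rw [Gset, Finset.mem_filter]
        refine ⟨Finset.mem_image.mpr ⟨j, Finset.mem_range.mpr (by omega), rfl⟩, hj.2⟩
      obtain ⟨i, hi⟩ := (hgrange (g' j)).mp hmem
      refine ⟨MvPolynomial.X i, ?_, fun _ => by rw [MvPolynomial.aeval_X, hi]⟩
      rw [ApproxRoot.mem_ordIdeal_one_iff]
      simp
    · by_cases hz : g' j = 0
      · exact ⟨0, Submodule.zero_mem _, fun _ => by rw [map_zero, hz]⟩
      · exact ⟨0, Submodule.zero_mem _, fun hjk => absurd ⟨hjk, hz⟩ hj⟩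
  choose Z hZO hZval using hZex
  set b : ℕ → MvPolynomial (Fin (t + 1)) F := fun j => MvPolynomial.C (c j) + Z j with hbdef
  set q : Polynomial (MvPolynomial (Fin (t + 1)) F) :=
    ∑ j ∈ Finset.range (k + 2), Polynomial.C (b j) * Polynomial.X ^ j with hqdef
  have hqcoeff : ∀ i, q.coeff i = if i < k + 2 then b i else 0 := fun i => by
    rw [hqdef]; exact ApproxRoot.coeff_sum_C_mul_X_pow b (k + 2) i
  have hq0 : q.coeff 0 ∈ ApproxRoot.ordIdeal (F := F) (σ := Fin (t + 1)) 1 := by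
    rw [hqcoeff 0, if_pos (by omega), hbdef]
    simp only [hc0, map_zero, zero_add]
    exact hZO 0
  have hq1 : q.coeff 1 - MvPolynomial.C (c 1) ∈
      ApproxRoot.ordIdeal (F := F) (σ := Fin (t + 1)) 1 := by
    rw [hqcoeff 1, if_pos (by omega), hbdef]
    simpa using hZO 1
  obtain ⟨W, hWO, hWdeg, hWq⟩ := ApproxRoot.newton_exists q hc1 hq0 hq1 k
  set wg : MvPolynomial (Fin n) F := MvPolynomial.aeval g W with hwgdef
  set wh : MvPolynomial (Fin n) F := hk - MvPolynomial.C α with hwhdef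
  set B : ℕ → MvPolynomial (Fin n) F := fun j => MvPolynomial.aeval g (b j) with hBdef
  set qR : Polynomial (MvPolynomial (Fin n) F) :=
    ∑ j ∈ Finset.range (k + 2), Polynomial.C (B j) * Polynomial.X ^ j with hqRdef
  have hBC : ∀ j, B j = MvPolynomial.C (c j) + MvPolynomial.aeval g (Z j) := by
    intro j
    rw [hBdef, hbdef]
    simp only [map_add, MvPolynomial.aeval_C, MvPolynomial.algebraMap_eq]
  have hBj : ∀ j, j ≤ k → B j = Hle k (D j) := by
    intro j hj
    rw [hBC j, hZval j hj, hg'def]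
    simp only [hH0 j]
    ring
  have hφq : ∀ w : MvPolynomial (Fin (t + 1)) F,
      MvPolynomial.aeval g (q.eval w) = qR.eval (MvPolynomial.aeval g w) := by
    intro w
    rw [hqdef, hqRdef, ApproxRoot.eval_sum_C_mul_X_pow, ApproxRoot.eval_sum_C_mul_X_pow,
      map_sum]
    refine Finset.sum_congr rfl fun j _ => ?_
    rw [map_mul, map_pow]
  have hqRwg : qR.eval wg ∈ ApproxRoot.ordIdeal (F := F) (σ := Fin n) (k + 1) := by
    rw [hwgdef, ← hφq]
    exact ApproxRoot.aeval_mem hgO hWq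
  have hwhO : wh ∈ ApproxRoot.ordIdeal (F := F) (σ := Fin n) 1 := by
    rw [ApproxRoot.mem_ordIdeal_one_iff, hwhdef, map_sub, MvPolynomial.constantCoeff_C]
    have : MvPolynomial.constantCoeff hk = α := by
      rw [← MvPolynomial.eval_zero]; exact hkval
    rw [this]; ring
  have hwgO : wg ∈ ApproxRoot.ordIdeal (F := F) (σ := Fin n) 1 :=
    ApproxRoot.aeval_mem hgO hWO
  -- Taylor expansion of P at hk
  have hPhk : Polynomial.eval hk P ∈ ApproxRoot.ordIdeal (F := F) (σ := Fin n) (k + 1) :=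
    ApproxRoot.Hle_eq_zero_iff.mp hkroot
  set N : ℕ := max (P.natDegree + 1) (k + 2) with hNdef
  have htay : Polynomial.eval hk P = ∑ j ∈ Finset.range N, D j * wh ^ j := by
    have h1 : Polynomial.eval hk P = (Polynomial.taylor (MvPolynomial.C α) P).eval wh := by
      rw [Polynomial.taylor_eval]
      congr 1
      rw [hwhdef]; ring
    rw [h1, Polynomial.eval_eq_sum_range' (n := N)
      (by rw [Polynomial.natDegree_taylor]; omega)]
    refine Finset.sum_congr rfl fun j _ => ?_
    rw [Polynomial.taylor_coeff]
  have hwhpow : ∀ j : ℕ, k + 1 ≤ j →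
      wh ^ j ∈ ApproxRoot.ordIdeal (F := F) (σ := Fin n) (k + 1) := by
    intro j hj
    have := ApproxRoot.ordIdeal_pow_mem (j := j) hwhO
    rw [mul_one] at this
    exact ApproxRoot.ordIdeal_antitone hj this
  have hdiff : (∑ j ∈ Finset.range N, D j * wh ^ j) - qR.eval wh ∈
      ApproxRoot.ordIdeal (F := F) (σ := Fin n) (k + 1) := by
    rw [hqRdef, ApproxRoot.eval_sum_C_mul_X_pow]
    rw [Finset.range_eq_Ico, ← Finset.sum_Ico_consecutive _ (Nat.zero_le (k + 2))
      (le_max_right (P.natDegree + 1) (k + 2)), ← Finset.range_eq_Ico]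
    have hsplit : (∑ j ∈ Finset.range (k + 2), D j * wh ^ j)
        + (∑ j ∈ Finset.Ico (k + 2) N, D j * wh ^ j)
        - (∑ j ∈ Finset.range (k + 2), B j * wh ^ j)
        = (∑ j ∈ Finset.range (k + 2), (D j - B j) * wh ^ j)
          + (∑ j ∈ Finset.Ico (k + 2) N, D j * wh ^ j) := by
      have h4 : (∑ j ∈ Finset.range (k + 2), (D j - B j) * wh ^ j)
          = (∑ j ∈ Finset.range (k + 2), D j * wh ^ j)
            - (∑ j ∈ Finset.range (k + 2), B j * wh ^ j) := by
        rw [← Finset.sum_sub_distrib]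
        exact Finset.sum_congr rfl fun j _ => by ring
      rw [h4]
      ring
    rw [hsplit]
    apply Ideal.add_mem
    · apply Ideal.sum_mem
      intro j hj
      rw [Finset.mem_range] at hj
      by_cases hjk : j ≤ k
      · rw [hBj j hjk]
        exact Ideal.mul_mem_right _ _ (ApproxRoot.sub_Hle_mem k (D j))
      · exact Ideal.mul_mem_left _ _ (hwhpow j (by omega))
    · apply Ideal.sum_mem
      intro j hj
      rw [Finset.mem_Ico] at hj
      exact Ideal.mul_mem_left _ _ (hwhpow j (by omega))
  have hqRwh : qR.eval wh ∈ ApproxRoot.ordIdeal (F := F) (σ := Fin n) (k + 1) := by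
    have heq : qR.eval wh = Polynomial.eval hk P
        - ((∑ j ∈ Finset.range N, D j * wh ^ j) - qR.eval wh) := by
      rw [htay]; ring
    rw [heq]
    exact Submodule.sub_mem _ hPhk hdiff
  -- uniqueness
  have hqR1 : qR.coeff 1 - MvPolynomial.C (c 1) ∈
      ApproxRoot.ordIdeal (F := F) (σ := Fin n) 1 := by
    rw [hqRdef, ApproxRoot.coeff_sum_C_mul_X_pow, if_pos (by omega), hBC 1]
    simpa using ApproxRoot.aeval_mem hgO (hZO 1)
  have huniq := ApproxRoot.newton_unique qR hc1 hqR1 hwhO hwgO k hqRwh hqRwg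
  refine ⟨MvPolynomial.C α + W, ?_, ?_⟩
  · refine le_trans (MvPolynomial.totalDegree_add _ _) ?_
    rw [MvPolynomial.totalDegree_C]
    simpa using hWdeg
  · have haeval : MvPolynomial.aeval g (MvPolynomial.C α + W)
        = MvPolynomial.C α + wg := by
      rw [map_add, MvPolynomial.aeval_C, MvPolynomial.algebraMap_eq, hwgdef]
    rw [haeval]
    have hcongr : Hle k hk = Hle k (MvPolynomial.C α + wg) := by
      apply ApproxRoot.Hle_congr
      have : hk - (MvPolynomial.C α + wg) = wh - wg := by rw [hwhdef]; ring
      rw [this]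
      exact huniq
    rw [← hcongr, ApproxRoot.Hle_eq_self hkdeg]
end

section
/- There exists an absolute constant C > 0 such that for all integers n, m with 2 ≤ n < 2^m, there exists an integer ℓ ≤ C·m²/log₂(n) and a family of subsets S₁, S₂, …, Sₙ of {1, 2, …, ℓ} such that |Sᵢ| = m for every i ∈ {1,…,n}, and |Sᵢ ∩ Sⱼ| ≤ log₂(n) for all i ≠ j. -/
open Finset

/-- Stirling-type lower bound on the factorial. -/
lemma nw_pow_div_ten_le_factorial : ∀ r : ℕ, ((r : ℝ) / 10) ^ r ≤ (Nat.factorial r : ℝ)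
  | 0 => by simp
  | (r + 1) => by
    rcases Nat.eq_zero_or_pos r with h0 | hpos
    · subst h0; norm_num [Nat.factorial]
    have ih := nw_pow_div_ten_le_factorial r
    have hr0 : (0 : ℝ) < r := by exact_mod_cast hpos
    have hexp : (1 + 1 / (r : ℝ)) ^ r ≤ 3 := by
      have h1 : (1 + 1 / (r : ℝ)) ≤ Real.exp (1 / r) := by
        have := Real.add_one_le_exp (1 / (r : ℝ)); linarith
      calc (1 + 1 / (r : ℝ)) ^ r ≤ (Real.exp (1 / r)) ^ r := by
            apply pow_le_pow_left₀ (by positivity) h1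
        _ = Real.exp 1 := by
            rw [← Real.exp_nat_mul]; congr 1; field_simp
        _ ≤ 3 := by have := Real.exp_one_lt_d9; linarith
    have key : ((r : ℝ) + 1) ^ r ≤ 3 * (r : ℝ) ^ r := by
      have h1 : ((r : ℝ) + 1) = (1 + 1 / r) * r := by field_simp
      rw [h1, mul_pow]
      have h2 : (0 : ℝ) ≤ (r : ℝ) ^ r := by positivity
      nlinarith [hexp, h2]
    have step1 : (((r : ℝ) + 1) / 10) ^ (r + 1) ≤ ((r : ℝ) + 1) * ((r : ℝ) / 10) ^ r := by
      have e1 : (((r : ℝ) + 1) / 10) ^ (r + 1)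
          = (((r : ℝ) + 1) / 10) * (((r : ℝ) + 1) ^ r / 10 ^ r) := by
        rw [pow_succ, div_pow]; ring
      have e2 : ((r : ℝ) / 10) ^ r = (r : ℝ) ^ r / 10 ^ r := div_pow _ _ _
      rw [e1]
      calc (((r : ℝ) + 1) / 10) * (((r : ℝ) + 1) ^ r / 10 ^ r)
          ≤ (((r : ℝ) + 1) / 10) * (3 * (r : ℝ) ^ r / 10 ^ r) := by gcongr
        _ = ((r : ℝ) + 1) * ((r : ℝ) ^ r / 10 ^ r) * (3 / 10) := by ring
        _ ≤ ((r : ℝ) + 1) * ((r : ℝ) ^ r / 10 ^ r) * 1 := by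
            have h3 : (0 : ℝ) ≤ ((r : ℝ) + 1) * ((r : ℝ) ^ r / 10 ^ r) := by positivity
            nlinarith
        _ = ((r : ℝ) + 1) * ((r : ℝ) / 10) ^ r := by rw [e2]; ring
    calc (((r + 1 : ℕ) : ℝ) / 10) ^ (r + 1) = (((r : ℝ) + 1) / 10) ^ (r + 1) := by push_cast; ring_nf
      _ ≤ ((r : ℝ) + 1) * ((r : ℝ) / 10) ^ r := step1
      _ ≤ ((r : ℝ) + 1) * (Nat.factorial r : ℝ) :=
          mul_le_mul_of_nonneg_left ih (by positivity)
      _ = (Nat.factorial (r + 1) : ℝ) := by rw [Nat.factorial_succ]; push_cast; ring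

/-- Factorwise comparison of descending factorials. -/
lemma nw_descFactorial_mul_pow_le {r m l : ℕ} (hrm : r ≤ m) (hml : m ≤ l) :
    m.descFactorial r * l ^ r ≤ l.descFactorial r * m ^ r := by
  have e1 : l ^ r = ∏ _i ∈ Finset.range r, l := by simp
  have e2 : m ^ r = ∏ _i ∈ Finset.range r, m := by simp
  rw [Nat.descFactorial_eq_prod_range, Nat.descFactorial_eq_prod_range, e1, e2,
    ← Finset.prod_mul_distrib, ← Finset.prod_mul_distrib]
  apply Finset.prod_le_prod'
  intro i _
  have h1 : i * m ≤ i * l := Nat.mul_le_mul_left _ hml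
  rw [Nat.sub_mul, Nat.sub_mul, Nat.mul_comm m l]
  exact Nat.sub_le_sub_left h1 _

/-- The central numeric inequality. -/
lemma nw_numeric {n m r ℓ : ℕ} (hr : 1 ≤ r) (hrm : r ≤ m) (hml : m ≤ ℓ)
    (hn : n < 2 ^ r) (hl : 20 * m ^ 2 ≤ ℓ * r) :
    n * m.choose r ^ 2 < ℓ.choose r := by
  have hRpos : (0 : ℝ) < (r : ℝ) := by exact_mod_cast hr
  have hMpos : (0 : ℝ) < (m : ℝ) := by exact_mod_cast lt_of_lt_of_le hr hrm
  have hcm : (0 : ℝ) < (m.choose r : ℝ) := by exact_mod_cast Nat.choose_pos hrm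
  have hfacpos : (0 : ℝ) < (Nat.factorial r : ℝ) := by exact_mod_cast Nat.factorial_pos r
  -- h1 : cm * L^r ≤ cl * M^r
  have h1 : (m.choose r : ℝ) * (ℓ : ℝ) ^ r ≤ (ℓ.choose r : ℝ) * (m : ℝ) ^ r := by
    have hnat := nw_descFactorial_mul_pow_le hrm hml
    rw [Nat.descFactorial_eq_factorial_mul_choose, Nat.descFactorial_eq_factorial_mul_choose]
      at hnat
    rw [mul_assoc, mul_assoc] at hnat
    have hnat2 : m.choose r * ℓ ^ r ≤ ℓ.choose r * m ^ r :=
      Nat.le_of_mul_le_mul_left hnat (Nat.factorial_pos r)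
    exact_mod_cast hnat2
  -- hA : cm ≤ (10M/R)^r
  have hA : (m.choose r : ℝ) ≤ (10 * (m : ℝ) / r) ^ r := by
    have h2 : (m.choose r : ℝ) ≤ (m : ℝ) ^ r / (Nat.factorial r : ℝ) := by
      have := Nat.choose_le_pow_div (α := ℝ) r m
      push_cast at this ⊢
      exact this
    have h3 : ((r : ℝ) / 10) ^ r ≤ (Nat.factorial r : ℝ) := nw_pow_div_ten_le_factorial r
    have h4 : (0 : ℝ) < ((r : ℝ) / 10) ^ r := by positivity
    calc (m.choose r : ℝ) ≤ (m : ℝ) ^ r / (Nat.factorial r : ℝ) := h2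
      _ ≤ (m : ℝ) ^ r / ((r : ℝ) / 10) ^ r := by gcongr
      _ = (10 * (m : ℝ) / r) ^ r := by
          rw [← div_pow]; congr 1; field_simp
  -- hB : 2^r * (10M/R)^r * M^r ≤ L^r
  have hB : (2 : ℝ) ^ r * (10 * (m : ℝ) / r) ^ r * (m : ℝ) ^ r ≤ (ℓ : ℝ) ^ r := by
    rw [← mul_pow, ← mul_pow]
    apply pow_le_pow_left₀ (by positivity)
    have h9 : (2 : ℝ) * (10 * (m : ℝ) / r) * m = 20 * (m : ℝ) ^ 2 / r := by
      field_simp; ring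
    rw [h9, div_le_iff₀ hRpos]
    exact_mod_cast hl
  -- combine
  have hn' : (n : ℝ) < (2 : ℝ) ^ r := by exact_mod_cast hn
  have h5 : (n : ℝ) * (m.choose r : ℝ) * (m : ℝ) ^ r < (ℓ : ℝ) ^ r := by
    calc (n : ℝ) * (m.choose r : ℝ) * (m : ℝ) ^ r
        < (2 : ℝ) ^ r * (m.choose r : ℝ) * (m : ℝ) ^ r := by
          have : (0 : ℝ) < (m.choose r : ℝ) * (m : ℝ) ^ r := by positivity
          nlinarith [this]
      _ ≤ (2 : ℝ) ^ r * ((10 * (m : ℝ) / r) ^ r) * (m : ℝ) ^ r := by gcongr <;> positivity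
      _ ≤ (ℓ : ℝ) ^ r := hB
  have h6 : (n : ℝ) * (m.choose r : ℝ) ^ 2 * (m : ℝ) ^ r < (ℓ.choose r : ℝ) * (m : ℝ) ^ r := by
    nlinarith [mul_lt_mul_of_pos_right h5 hcm, h1]
  have h7 : (n : ℝ) * (m.choose r : ℝ) ^ 2 < (ℓ.choose r : ℝ) :=
    lt_of_mul_lt_mul_right h6 (by positivity)
  exact_mod_cast h7

/-- Bridge from the numeric inequality to the counting inequality. -/
lemma nw_bridge {n m r ℓ t : ℕ} (hrm : r ≤ m) (hml : m ≤ ℓ) (ht : t < n)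
    (h : n * m.choose r ^ 2 < ℓ.choose r) :
    t * (m.choose r * (ℓ - r).choose (m - r)) < ℓ.choose m := by
  have hid := Nat.choose_mul (n := ℓ) hrm
  have hc' : 0 < (ℓ - r).choose (m - r) := Nat.choose_pos (Nat.sub_le_sub_right hml r)
  have h2 : t * m.choose r ^ 2 < ℓ.choose r :=
    lt_of_le_of_lt (Nat.mul_le_mul_right _ (le_of_lt ht)) h
  have h3 : t * m.choose r ^ 2 * ((ℓ - r).choose (m - r))
      < ℓ.choose r * ((ℓ - r).choose (m - r)) :=
    Nat.mul_lt_mul_of_lt_of_le h2 (le_refl _) hc'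
  rw [← hid] at h3
  have h4 : t * (m.choose r * (ℓ - r).choose (m - r)) * m.choose r
      < ℓ.choose m * m.choose r := by
    calc t * (m.choose r * (ℓ - r).choose (m - r)) * m.choose r
        = t * m.choose r ^ 2 * ((ℓ - r).choose (m - r)) := by ring
      _ < _ := h3
  exact Nat.lt_of_mul_lt_mul_right h4

/-- Counting supersets of a fixed set. -/
lemma nw_card_filter_superset {ℓ : ℕ} (A : Finset (Fin ℓ)) (m : ℕ) :
    (((Finset.univ : Finset (Fin ℓ)).powersetCard m).filter (fun T => A ⊆ T)).card
      ≤ (ℓ - A.card).choose (m - A.card) := by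
  classical
  have hcard : (((Finset.univ : Finset (Fin ℓ)) \ A).powersetCard (m - A.card)).card
      = (ℓ - A.card).choose (m - A.card) := by
    rw [Finset.card_powersetCard, Finset.card_sdiff_of_subset (Finset.subset_univ A), Finset.card_univ,
      Fintype.card_fin]
  rw [← hcard]
  apply Finset.card_le_card_of_injOn (fun T => T \ A)
  · intro T hT
    simp only [Finset.mem_coe, Finset.mem_filter, Finset.mem_powersetCard] at hT
    obtain ⟨⟨-, hcardT⟩, hAT⟩ := hT
    refine Finset.mem_powersetCard.mpr ⟨Finset.sdiff_subset_sdiff (Finset.subset_univ T)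
      (le_refl _), ?_⟩
    rw [Finset.card_sdiff_of_subset hAT, hcardT]
  · intro T1 h1 T2 h2 he
    simp only [Finset.mem_coe, Finset.mem_filter] at h1 h2
    have h3 := congrArg (fun X => X ∪ A) he
    simp only at h3
    rwa [Finset.sdiff_union_of_subset h1.2, Finset.sdiff_union_of_subset h2.2] at h3

/-- The greedy step: a new good set exists. -/
lemma nw_greedy_step {ℓ m r t : ℕ} (S : Fin t → Finset (Fin ℓ))
    (hS : ∀ i, (S i).card = m)
    (hcount : t * (m.choose r * (ℓ - r).choose (m - r)) < ℓ.choose m) :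
    ∃ T : Finset (Fin ℓ), T.card = m ∧ ∀ i, (T ∩ S i).card < r := by
  classical
  set U := (Finset.univ : Finset (Fin ℓ)).powersetCard m with hU
  have hUcard : U.card = ℓ.choose m := by
    rw [hU, Finset.card_powersetCard, Finset.card_univ, Fintype.card_fin]
  set Bad := U.filter (fun T => ∃ i, r ≤ (T ∩ S i).card) with hBad
  have hBadsub : Bad ⊆ U := Finset.filter_subset _ _
  have hBadcard : Bad.card < U.card := by
    have h1 : Bad ⊆ Finset.univ.biUnion
        (fun i : Fin t => U.filter (fun T => r ≤ (T ∩ S i).card)) := by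
      intro T hT
      rw [hBad, Finset.mem_filter] at hT
      obtain ⟨hTU, i, hi⟩ := hT
      exact Finset.mem_biUnion.mpr ⟨i, Finset.mem_univ _, Finset.mem_filter.mpr ⟨hTU, hi⟩⟩
    have h2 : ∀ i : Fin t, (U.filter (fun T => r ≤ (T ∩ S i).card)).card
        ≤ m.choose r * (ℓ - r).choose (m - r) := by
      intro i
      have hsub : U.filter (fun T => r ≤ (T ∩ S i).card)
          ⊆ ((S i).powersetCard r).biUnion (fun A => U.filter (fun T => A ⊆ T)) := by
        intro T hT
        rw [Finset.mem_filter] at hT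
        obtain ⟨A, hA1, hA2⟩ := Finset.exists_subset_card_eq hT.2
        refine Finset.mem_biUnion.mpr ⟨A, ?_, ?_⟩
        · exact Finset.mem_powersetCard.mpr ⟨hA1.trans Finset.inter_subset_right, hA2⟩
        · exact Finset.mem_filter.mpr ⟨hT.1, hA1.trans Finset.inter_subset_left⟩
      calc (U.filter (fun T => r ≤ (T ∩ S i).card)).card
          ≤ (((S i).powersetCard r).biUnion (fun A => U.filter (fun T => A ⊆ T))).card :=
            Finset.card_le_card hsub
        _ ≤ ∑ A ∈ (S i).powersetCard r, (U.filter (fun T => A ⊆ T)).card :=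
            Finset.card_biUnion_le
        _ ≤ ∑ _A ∈ (S i).powersetCard r, (ℓ - r).choose (m - r) := by
            apply Finset.sum_le_sum
            intro A hA
            have hAcard : A.card = r := (Finset.mem_powersetCard.mp hA).2
            have := nw_card_filter_superset A m
            rwa [hAcard] at this
        _ = m.choose r * (ℓ - r).choose (m - r) := by
            rw [Finset.sum_const, Finset.card_powersetCard, hS i, smul_eq_mul]
    calc Bad.card
        ≤ (Finset.univ.biUnion
            (fun i : Fin t => U.filter (fun T => r ≤ (T ∩ S i).card))).card :=
          Finset.card_le_card h1
      _ ≤ ∑ i : Fin t, (U.filter (fun T => r ≤ (T ∩ S i).card)).card := Finset.card_biUnion_le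
      _ ≤ ∑ _i : Fin t, m.choose r * (ℓ - r).choose (m - r) :=
          Finset.sum_le_sum (fun i _ => h2 i)
      _ = t * (m.choose r * (ℓ - r).choose (m - r)) := by
          rw [Finset.sum_const, Finset.card_univ, Fintype.card_fin, smul_eq_mul]
      _ < ℓ.choose m := hcount
      _ = U.card := hUcard.symm
  have hne : (U \ Bad).Nonempty := by
    rw [← Finset.card_pos, Finset.card_sdiff_of_subset hBadsub]
    omega
  obtain ⟨T, hTmem⟩ := hne
  rw [Finset.mem_sdiff] at hTmem
  obtain ⟨hTU, hTBad⟩ := hTmem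
  refine ⟨T, (Finset.mem_powersetCard.mp hTU).2, ?_⟩
  intro i
  by_contra hcon
  push_neg at hcon
  exact hTBad (Finset.mem_filter.mpr ⟨hTU, ⟨i, hcon⟩⟩)

/-- Greedy construction of the whole family. -/
lemma nw_build {ℓ m r n : ℕ}
    (hcount : ∀ t : ℕ, t < n → t * (m.choose r * (ℓ - r).choose (m - r)) < ℓ.choose m) :
    ∀ t : ℕ, t ≤ n → ∃ S : Fin t → Finset (Fin ℓ),
      (∀ i, (S i).card = m) ∧ ∀ i j, i ≠ j → (S i ∩ S j).card < r := by
  intro t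
  induction t with
  | zero => exact fun _ => ⟨fun i => i.elim0, fun i => i.elim0, fun i => i.elim0⟩
  | succ t ih =>
    intro ht
    obtain ⟨S, hS1, hS2⟩ := ih (Nat.le_of_succ_le ht)
    obtain ⟨T, hT1, hT2⟩ := nw_greedy_step S hS1 (hcount t (Nat.lt_of_succ_le ht))
    refine ⟨Fin.snoc S T, ?_, ?_⟩
    · intro i
      refine Fin.lastCases ?_ ?_ i
      · simp [Fin.snoc_last, hT1]
      · intro j; simp [Fin.snoc_castSucc, hS1]
    · intro i j hij
      rcases Fin.eq_castSucc_or_eq_last i with ⟨i', rfl⟩ | rfl <;>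
        rcases Fin.eq_castSucc_or_eq_last j with ⟨j', rfl⟩ | rfl
      · have hij' : i' ≠ j' := fun h => hij (by rw [h])
        simpa [Fin.snoc_castSucc] using hS2 i' j' hij'
      · have := hT2 i'
        rw [Finset.inter_comm] at this
        simpa [Fin.snoc_castSucc, Fin.snoc_last] using this
      · simpa [Fin.snoc_castSucc, Fin.snoc_last] using hT2 j'
      · exact absurd rfl hij

set_option maxHeartbeats 1000000 in
/-- **Nisan–Wigderson designs.** There is an absolute constant `C > 0` such
that for all integers `2 ≤ n < 2^m` there exist `ℓ ≤ C·m²/log₂ n` and subsets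
`S₁, …, Sₙ ⊆ {1,…,ℓ}`, each of size `m`, with `|Sᵢ ∩ Sⱼ| ≤ log₂ n` for all
`i ≠ j`. -/
theorem nisan_wigderson_designs :
    ∃ C : ℝ, 0 < C ∧
      ∀ n m : ℕ, 2 ≤ n → n < 2 ^ m →
        ∃ ℓ : ℕ, (ℓ : ℝ) ≤ C * (m : ℝ) ^ 2 / Real.logb 2 n ∧
          ∃ S : Fin n → Finset (Fin ℓ),
            (∀ i, (S i).card = m) ∧
            ∀ i j, i ≠ j → ((S i ∩ S j).card : ℝ) ≤ Real.logb 2 n := by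
  refine ⟨40, by norm_num, ?_⟩
  intro n m hn2 hnm
  set k := Nat.log 2 n with hk
  set r := k + 1 with hr
  have hn0 : n ≠ 0 := by omega
  have hpow : 2 ^ k ≤ n := Nat.pow_log_le_self 2 hn0
  have hpow2 : n < 2 ^ r := Nat.lt_pow_succ_log_self (by norm_num) n
  have hkm : k < m := by
    by_contra h
    push_neg at h
    exact absurd hnm (not_lt.mpr (le_trans (Nat.pow_le_pow_right (by norm_num) h) hpow))
  have hrm : r ≤ m := hkm
  have hrpos : 0 < r := Nat.succ_pos k
  have hm1 : 1 ≤ m := le_trans hrpos hrm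
  set ℓ := 20 * (m * m / r + 1) with hℓ
  have hq : m ≤ m * m / r := by
    have h1 : m * m / m ≤ m * m / r := Nat.div_le_div_left hrm hrpos
    rwa [Nat.mul_div_cancel_left m hm1] at h1
  have hml : m ≤ ℓ := by
    have : m * m / r + 1 ≤ ℓ := by rw [hℓ]; omega
    omega
  have hl20 : 20 * m ^ 2 ≤ ℓ * r := by
    have h1 : m * m < m * m / r * r + r := by
      have h2 := Nat.div_add_mod (m * m) r
      have h3 := Nat.mod_lt (m * m) hrpos
      calc m * m = r * (m * m / r) + m * m % r := h2.symm
        _ < r * (m * m / r) + r := Nat.add_lt_add_left h3 _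
        _ = m * m / r * r + r := by rw [Nat.mul_comm]
    calc 20 * m ^ 2 = 20 * (m * m) := by ring
      _ ≤ 20 * (m * m / r * r + r) := Nat.mul_le_mul_left _ (le_of_lt h1)
      _ = ℓ * r := by rw [hℓ]; ring
  have hnum := nw_numeric hrpos hrm hml hpow2 hl20
  obtain ⟨S, hS1, hS2⟩ := nw_build (fun t ht => nw_bridge hrm hml ht hnum) n le_rfl
  -- real estimates
  have hn1R : (1 : ℝ) < (n : ℝ) := by exact_mod_cast lt_of_lt_of_le one_lt_two hn2
  have hlogpos : 0 < Real.logb 2 (n : ℝ) := Real.logb_pos (by norm_num) hn1R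
  have hlogk : (k : ℝ) ≤ Real.logb 2 (n : ℝ) := by
    have h1 : ((2 : ℝ)) ^ k ≤ (n : ℝ) := by exact_mod_cast hpow
    calc (k : ℝ) = Real.logb 2 ((2 : ℝ) ^ k) := by
          rw [Real.logb_pow, Real.logb_self_eq_one (by norm_num : (1:ℝ) < 2)]; ring
      _ ≤ Real.logb 2 (n : ℝ) :=
          Real.logb_le_logb_of_le (by norm_num : (1:ℝ) < 2) (by positivity) h1
  have hlogr : Real.logb 2 (n : ℝ) ≤ (r : ℝ) := by
    have h1 : (n : ℝ) ≤ ((2 : ℝ)) ^ r := by exact_mod_cast le_of_lt hpow2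
    calc Real.logb 2 (n : ℝ) ≤ Real.logb 2 ((2 : ℝ) ^ r) :=
          Real.logb_le_logb_of_le (by norm_num : (1:ℝ) < 2) (by positivity) h1
      _ = (r : ℝ) := by
          rw [Real.logb_pow, Real.logb_self_eq_one (by norm_num : (1:ℝ) < 2)]; ring
  refine ⟨ℓ, ?_, S, hS1, ?_⟩
  · have hRpos : (0 : ℝ) < (r : ℝ) := by exact_mod_cast hrpos
    have hcast : ((m * m / r : ℕ) : ℝ) ≤ (m : ℝ) * m / r := by
      have := Nat.cast_div_le (α := ℝ) (m := m * m) (n := r)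
      push_cast at this ⊢
      exact this
    have hr_le : (r : ℝ) ≤ (m : ℝ) * m := by
      have : r ≤ m * m := le_trans hrm (Nat.le_mul_of_pos_left m hm1)
      exact_mod_cast this
    have h20 : (20 : ℝ) ≤ 20 * ((m : ℝ) * m / r) := by
      have h21 : (1 : ℝ) ≤ (m : ℝ) * m / r := by
        rw [le_div_iff₀ hRpos]; linarith [hr_le]
      linarith
    have hlcast : (ℓ : ℝ) = 20 * (((m * m / r : ℕ) : ℝ) + 1) := by rw [hℓ]; push_cast; ring
    have hstep : (ℓ : ℝ) ≤ 40 * ((m : ℝ) * m / r) := by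
      rw [hlcast]; linarith [h20, hcast]
    calc (ℓ : ℝ) ≤ 40 * ((m : ℝ) * m / r) := hstep
      _ ≤ 40 * ((m : ℝ) * m / Real.logb 2 (n : ℝ)) := by
          apply mul_le_mul_of_nonneg_left _ (by norm_num)
          apply div_le_div_of_nonneg_left (by positivity) hlogpos hlogr
      _ = 40 * (m : ℝ) ^ 2 / Real.logb 2 (n : ℝ) := by ring
  · intro i j hij
    have h1 : (S i ∩ S j).card < r := hS2 i j hij
    have h2 : (S i ∩ S j).card ≤ k := by omega
    calc ((S i ∩ S j).card : ℝ) ≤ (k : ℝ) := by exact_mod_cast h2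
      _ ≤ Real.logb 2 (n : ℝ) := hlogk
end
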